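/- arXiv:0905.1383 — 2 statements merged into one kernel-verified Lean document; each statement's English description precedes it below -/
import Mathlib

section
/- Let I be a finite-dimensional Z/2-graded ideal of a Lie superalgebra g over an algebraically closed field, and let M be a simple g-module with representation ρ. If ρ(x) is a nilpotent endomorphism of M for every x ∈ I, then I·M = 0. -/
section SuperEngelAux

open LieModule

attribute [local instance 100] LieRing.ofAssociativeRing

variable {F : Type} [Field F] {M : Type} [AddCommGroup M] [Module F M]

lemma engel_chain (L : Type) [AddCommGroup L] [Module F L] [FiniteDimensional F L]
    (π : L →ₗ[F] Module.End F M)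
    (hcl : ∀ a b : L, ∃ c : L, π c = π a * π b - π b * π a)
    (hnl : ∀ a : L, IsNilpotent (π a)) :
    ∃ (n : ℕ) (C : ℕ → Submodule F M), C 0 = ⊤ ∧ C n = ⊥ ∧
      ∀ j, ∀ a : L, ∀ m ∈ C j, π a m ∈ C (j + 1) := by
  classical
  let R : Submodule F (Module.End F M) := LinearMap.range π
  haveI : FiniteDimensional F ↥R := inferInstance
  let E : LieSubalgebra F (Module.End F M) :=
    { toSubmodule := R
      lie_mem' := by
        rintro x y ⟨a, rfl⟩ ⟨b, rfl⟩
        obtain ⟨c, hc⟩ := hcl a b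
        show ⁅π a, π b⁆ ∈ R
        rw [Ring.lie_def, ← hc]
        exact ⟨c, rfl⟩ }
  haveI : FiniteDimensional F ↥E := ‹FiniteDimensional F ↥R›
  have hE : ∀ x : ↥E, IsNilpotent (LieModule.toEnd F ↥E M x) := by
    intro x
    obtain ⟨a, ha⟩ := x.2
    have hfe : LieModule.toEnd F ↥E M x = (x : Module.End F M) := by
      ext m; rfl
    rw [hfe, ← ha]
    exact hnl a
  have hnilmod : LieModule.IsNilpotent ↥E M :=
    LieAlgebra.isEngelian_of_isNoetherian M hE
  obtain ⟨n, hn⟩ := LieModule.IsNilpotent.nilpotent F ↥E M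
  refine ⟨n, fun j => (LieModule.lowerCentralSeries F ↥E M j : Submodule F M), ?_, ?_, ?_⟩
  · simp
  · simp only [hn, LieSubmodule.bot_toSubmodule]
  · intro j a m hm
    have hmem : π a ∈ E := ⟨a, rfl⟩
    have h1 : (⁅(⟨π a, hmem⟩ : ↥E), m⁆ : M) ∈ ⁅(⊤ : LieIdeal F ↥E), LieModule.lowerCentralSeries F ↥E M j⁆ :=
      LieSubmodule.lie_mem_lie (LieSubmodule.mem_top _) hm
    rw [← LieModule.lowerCentralSeries_succ] at h1
    exact h1

variable {F : Type} [Field F] {M : Type} [AddCommGroup M] [Module F M]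

/-- One step of the super Engel induction: given a common-kernel vector for `R` and the
smaller odd piece `Dj1`, produce one for `R` and `Dj`, using that odd elements
anticommute (mod `R`) on such vectors. -/
lemma grassmann_step (htwo : (2:F) ≠ 0)
    (R V Dj Dj1 : Submodule F (Module.End F M)) [FiniteDimensional F ↥Dj]
    (hDjV : Dj ≤ V) (hDj1V : Dj1 ≤ V)
    (hchain : ∀ r ∈ R, ∀ v ∈ Dj, r * v - v * r ∈ Dj1)
    (hVV : ∀ u ∈ V, ∀ v ∈ V, u * v + v * u ∈ R)
    (m : M) (hm : m ≠ 0) (hmR : ∀ r ∈ R, r m = 0) (hmD : ∀ u ∈ Dj1, u m = 0) :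
    ∃ m' : M, m' ≠ 0 ∧ (∀ r ∈ R, r m' = 0) ∧ (∀ v ∈ Dj, v m' = 0) := by
  classical
  set Wp : M → Prop := fun w => (∀ r ∈ R, r w = 0) ∧ (∀ u ∈ Dj1, u w = 0) with hWp
  have hmW : Wp m := ⟨hmR, hmD⟩
  -- W is stable under Dj
  have hW1 : ∀ z ∈ Dj, ∀ w, Wp w → Wp (z w) := by
    intro z hz w hw
    constructor
    · intro r hr
      have h1 : (r * z - z * r) w = 0 := hw.2 _ (hchain r hr z hz)
      have h2 : r (z w) - z (r w) = 0 := by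
        simpa [LinearMap.sub_apply, Module.End.mul_apply] using h1
      have h3 : r w = 0 := hw.1 r hr
      rw [h3, map_zero, sub_zero] at h2
      exact h2
    · intro u hu
      have h1 : (u * z + z * u) w = 0 := hw.1 _ (hVV u (hDj1V hu) z (hDjV hz))
      have h2 : u (z w) + z (u w) = 0 := by
        simpa [LinearMap.add_apply, Module.End.mul_apply] using h1
      have h3 : u w = 0 := hw.2 u hu
      rw [h3, map_zero, add_zero] at h2
      exact h2
  -- squares of Dj elements kill W
  have hW3 : ∀ z ∈ Dj, ∀ w, Wp w → z (z w) = 0 := by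
    intro z hz w hw
    have h1 : (z * z + z * z) w = 0 := hw.1 _ (hVV z (hDjV hz) z (hDjV hz))
    have h2 : z (z w) + z (z w) = 0 := by
      simpa [LinearMap.add_apply, Module.End.mul_apply] using h1
    have h3 : (2:F) • (z (z w)) = 0 := by rw [two_smul]; exact h2
    rcases smul_eq_zero.mp h3 with h | h
    · exact absurd h htwo
    · exact h
  -- a finite spanning family of Dj
  set t := Module.finrank F ↥Dj with ht
  let b : Module.Basis (Fin t) F ↥Dj := Module.finBasis F ↥Dj
  let bb : Fin t → Module.End F M := fun i => ((b i : ↥Dj) : Module.End F M)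
  have hbb : ∀ i, bb i ∈ Dj := fun i => (b i).2
  let appl : List (Fin t) → M → M := fun l w => l.foldr (fun i acc => bb i acc) w
  have appl_nil : ∀ w, appl [] w = w := fun w => rfl
  have appl_cons : ∀ i l w, appl (i :: l) w = bb i (appl l w) := fun i l w => rfl
  have hWa : ∀ l w, Wp w → Wp (appl l w) := by
    intro l
    induction l with
    | nil => intro w hw; exact hw
    | cons i l ih =>
      intro w hw
      rw [appl_cons]
      exact hW1 _ (hbb i) _ (ih w hw)
  -- key anticommutation lemma
  have hK : ∀ l (w : M), Wp w → ∀ i ∈ l, bb i (appl l w) = 0 := by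
    intro l
    induction l with
    | nil => intro w _ i hi; exact absurd hi List.not_mem_nil
    | cons j l ih =>
      intro w hw i hi
      have hx : Wp (appl l w) := hWa l w hw
      rw [appl_cons]
      rcases List.mem_cons.mp hi with h | h
      · subst h
        exact hW3 _ (hbb i) _ hx
      · have hxi : bb i (appl l w) = 0 := ih w hw i h
        have h1 : (bb i * bb j + bb j * bb i) (appl l w) = 0 :=
          hx.1 _ (hVV _ (hDjV (hbb i)) _ (hDjV (hbb j)))
        have h2 : bb i (bb j (appl l w)) + bb j (bb i (appl l w)) = 0 := by
          simpa [LinearMap.add_apply, Module.End.mul_apply] using h1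
        rw [hxi, map_zero, add_zero] at h2
        exact h2
  -- lists with duplicates act by zero
  have hdup : ∀ l (w : M), Wp w → ¬ l.Nodup → appl l w = 0 := by
    intro l
    induction l with
    | nil => intro w _ h; exact absurd List.nodup_nil h
    | cons a l ih =>
      intro w hw h
      by_cases ha : a ∈ l
      · rw [appl_cons]
        exact hK l w hw a ha
      · have : ¬ l.Nodup := by
          intro hnd
          exact h (List.nodup_cons.mpr ⟨ha, hnd⟩)
        rw [appl_cons, ih w hw this, map_zero]
  -- choose a product of maximal length that is nonzero
  set S : ℕ → Prop := fun ℓ => ∃ l : List (Fin t), l.length = ℓ ∧ appl l m ≠ 0 with hS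
  have hS0 : S 0 := ⟨[], rfl, by rw [appl_nil]; exact hm⟩
  set L := Nat.findGreatest S t with hL
  have hSL : S L := Nat.findGreatest_spec (Nat.zero_le t) hS0
  obtain ⟨l, hlen, hne⟩ := hSL
  refine ⟨appl l m, hne, (hWa l m hmW).1, ?_⟩
  have hkill : ∀ i, bb i (appl l m) = 0 := by
    intro i
    by_cases hc : L + 1 ≤ t
    · have hgt : ¬ S (L + 1) :=
        Nat.findGreatest_is_greatest (Nat.lt_succ_self L) hc
      by_contra hne2
      exact hgt ⟨i :: l, by simp [hlen], by rw [appl_cons] at *; exact hne2⟩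
    · -- L = t, so i :: l has length > card (Fin t) and hence a duplicate
      have hLt : L = t := le_antisymm (Nat.findGreatest_le t) (by omega)
      have hnodup : ¬ (i :: l).Nodup := by
        intro hnd
        have := hnd.length_le_card
        simp [hlen, hLt] at this
      have := hdup (i :: l) m hmW hnodup
      rw [appl_cons] at this
      exact this
  intro v hv
  have hsum := Module.Basis.sum_repr b ⟨v, hv⟩
  have hv' : v = ∑ i, (b.repr ⟨v, hv⟩) i • bb i := by
    have := congrArg (Subtype.val) hsum
    simp only [Submodule.coe_sum, Submodule.coe_smul] at this
    exact this.symm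
  rw [hv']
  rw [LinearMap.sum_apply]
  refine Finset.sum_eq_zero fun i _ => ?_
  rw [LinearMap.smul_apply, hkill i, smul_zero]

/-- Engel's theorem for a Lie superalgebra of endomorphisms. -/
lemma super_engel (htwo : (2:F) ≠ 0)
    (R V : Submodule F (Module.End F M))
    [FiniteDimensional F ↥R] [FiniteDimensional F ↥V]
    (hRR : ∀ r ∈ R, ∀ r' ∈ R, r * r' - r' * r ∈ R)
    (hRV : ∀ r ∈ R, ∀ v ∈ V, r * v - v * r ∈ V)
    (hVV : ∀ u ∈ V, ∀ v ∈ V, u * v + v * u ∈ R)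
    (hnR : ∀ r ∈ R, IsNilpotent r)
    (hm0 : ∃ m : M, m ≠ 0) :
    ∃ m : M, m ≠ 0 ∧ (∀ r ∈ R, r m = 0) ∧ (∀ v ∈ V, v m = 0) := by
  classical
  -- the adjoint action of R on V
  have hst : ∀ r : ↥R, ∀ x ∈ V, (LieAlgebra.ad F (Module.End F M) (r : Module.End F M)) x ∈ V := by
    intro r x hx
    have := hRV r r.2 x hx
    simpa [LieAlgebra.ad_apply, Ring.lie_def] using this
  have hadapp : ∀ (a x : Module.End F M), (LieAlgebra.ad F (Module.End F M) a) x = a * x - x * a := by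
    intro a x
    simp [LieAlgebra.ad_apply, Ring.lie_def]
  let σ : ↥R →ₗ[F] Module.End F ↥V :=
    { toFun := fun r => LinearMap.restrict (LieAlgebra.ad F (Module.End F M) (r : Module.End F M)) (hst r)
      map_add' := by
        intro r s
        refine LinearMap.ext fun v => Subtype.ext ?_
        rw [LinearMap.add_apply]
        rw [Submodule.coe_add ((LinearMap.restrict _ (hst r)) v)]
        rw [LinearMap.restrict_coe_apply, LinearMap.restrict_coe_apply, LinearMap.restrict_coe_apply]
        rw [Submodule.coe_add, hadapp, hadapp, hadapp]
        rw [add_mul, mul_add]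
        abel
      map_smul' := by
        intro c r
        refine LinearMap.ext fun v => Subtype.ext ?_
        rw [RingHom.id_apply, LinearMap.smul_apply]
        rw [Submodule.coe_smul c ((LinearMap.restrict _ (hst r)) v)]
        rw [LinearMap.restrict_coe_apply, LinearMap.restrict_coe_apply]
        rw [Submodule.coe_smul, hadapp, hadapp]
        rw [smul_sub, smul_mul_assoc, mul_smul_comm] }
  have hσ : ∀ (r : ↥R) (v : ↥V),
      ((σ r v : ↥V) : Module.End F M) = (r : Module.End F M) * v - v * r := by
    intro r v
    show ((LinearMap.restrict _ (hst r)) v : Module.End F M) = _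
    rw [LinearMap.restrict_coe_apply, hadapp]
  have hσcl : ∀ a b : ↥R, ∃ c : ↥R, σ c = σ a * σ b - σ b * σ a := by
    intro a b
    have hmem : (a : Module.End F M) * b - b * a ∈ R := hRR _ a.2 _ b.2
    refine ⟨⟨_, hmem⟩, ?_⟩
    refine LinearMap.ext fun v => Subtype.ext ?_
    rw [hσ ⟨_, hmem⟩ v]
    have h6 : (σ a * σ b - σ b * σ a) v = σ a (σ b v) - σ b (σ a v) := by
      rw [LinearMap.sub_apply, Module.End.mul_apply, Module.End.mul_apply]
    rw [h6, Submodule.coe_sub, hσ a (σ b v), hσ b (σ a v), hσ b v, hσ a v]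
    show ((a : Module.End F M) * b - b * a) * v - v * ((a : Module.End F M) * b - b * a) = _
    noncomm_ring
  have hσnl : ∀ a : ↥R, IsNilpotent (σ a) := by
    intro a
    have had : IsNilpotent (LieAlgebra.ad F (Module.End F M) (a : Module.End F M)) :=
      LieAlgebra.ad_nilpotent_of_nilpotent (R := F) (hnR _ a.2)
    obtain ⟨q, hq⟩ := had
    refine ⟨q, ?_⟩
    show (LinearMap.restrict _ (hst a)) ^ q = 0
    rw [Module.End.pow_restrict q (hst a)]
    refine LinearMap.ext fun v => Subtype.ext ?_
    rw [LinearMap.restrict_coe_apply, hq]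
    simp
  obtain ⟨n, C, hC0, hCn, hCstep⟩ := engel_chain ↥R σ hσcl hσnl
  let D : ℕ → Submodule F (Module.End F M) := fun j => (C j).map V.subtype
  have hDV : ∀ j, D j ≤ V := fun j => Submodule.map_subtype_le V (C j)
  have hD0 : D 0 = V := by
    simp only [D, hC0, Submodule.map_top, Submodule.range_subtype]
  have hDn : D n = ⊥ := by
    simp only [D, hCn, Submodule.map_bot]
  have hDchain : ∀ j, ∀ r ∈ R, ∀ v ∈ D j, r * v - v * r ∈ D (j + 1) := by
    rintro j r hr v ⟨v', hv', rfl⟩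
    have hmem := hCstep j ⟨r, hr⟩ v' hv'
    refine ⟨σ ⟨r, hr⟩ v', hmem, ?_⟩
    have := hσ ⟨r, hr⟩ v'
    simpa using this
  -- base vector: killed by R
  have hRcl : ∀ a b : ↥R, ∃ c : ↥R, R.subtype c =
      R.subtype a * R.subtype b - R.subtype b * R.subtype a := by
    intro a b
    exact ⟨⟨_, hRR _ a.2 _ b.2⟩, rfl⟩
  have hRnl : ∀ a : ↥R, IsNilpotent (R.subtype a) := fun a => hnR _ a.2
  obtain ⟨n', C', hC'0, hC'n, hC'step⟩ := engel_chain ↥R R.subtype hRcl hRnl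
  have hbase : ∃ m : M, m ≠ 0 ∧ (∀ r ∈ R, r m = 0) := by
    set Sb : ℕ → Prop := fun j => C' j ≠ ⊥ with hSb
    have hSb0 : Sb 0 := by
      rw [hSb]
      simp only [hC'0]
      intro h
      obtain ⟨m, hm⟩ := hm0
      have : m ∈ (⊤ : Submodule F M) := trivial
      rw [h] at this
      exact hm this
    set j0 := Nat.findGreatest Sb n' with hj0
    have hj0S : Sb j0 := Nat.findGreatest_spec (Nat.zero_le n') hSb0
    have hj0le : j0 ≤ n' := Nat.findGreatest_le n'
    have hj0ne : j0 ≠ n' := by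
      intro h
      rw [h] at hj0S
      exact hj0S hC'n
    have hnext : C' (j0 + 1) = ⊥ := by
      have := Nat.findGreatest_is_greatest (P := Sb) (Nat.lt_succ_self j0) (by omega)
      simpa [Sb, not_not] using this
    obtain ⟨m, hmC, hm⟩ := (Submodule.ne_bot_iff _).mp hj0S
    refine ⟨m, hm, fun r hr => ?_⟩
    have := hC'step j0 ⟨r, hr⟩ m hmC
    rw [hnext] at this
    simpa using this
  -- descending induction along D
  have hstep : ∀ j, (∃ m : M, m ≠ 0 ∧ (∀ r ∈ R, r m = 0) ∧ (∀ u ∈ D (j+1), u m = 0)) →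
      (∃ m : M, m ≠ 0 ∧ (∀ r ∈ R, r m = 0) ∧ (∀ u ∈ D j, u m = 0)) := by
    intro j ⟨m, hm, hmR, hmD⟩
    haveI : FiniteDimensional F ↥(D j) := Submodule.finiteDimensional_of_le (hDV j)
    exact grassmann_step htwo R V (D j) (D (j+1)) (hDV j) (hDV (j+1)) (hDchain j) hVV m hm hmR hmD
  have hall : ∀ i, ∃ m : M, m ≠ 0 ∧ (∀ r ∈ R, r m = 0) ∧ (∀ u ∈ D (n - i), u m = 0) := by
    intro i
    induction i with
    | zero =>
      obtain ⟨m, hm, hmR⟩ := hbase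
      refine ⟨m, hm, hmR, fun u hu => ?_⟩
      rw [Nat.sub_zero, hDn] at hu
      simp only [Submodule.mem_bot] at hu
      rw [hu]
      simp
    | succ i ih =>
      rcases Nat.lt_or_ge i n with h | h
      · have heq : n - i = (n - (i+1)) + 1 := by omega
        rw [heq] at ih
        exact hstep _ ih
      · have heq : n - (i+1) = n - i := by omega
        rw [heq]
        exact ih
  obtain ⟨m, hm, hmR, hmV⟩ := hall n
  rw [Nat.sub_self, hD0] at hmV
  exact ⟨m, hm, hmR, hmV⟩

end SuperEngelAux

/-- if `I` is a finite-dimensional Z/2-graded ideal of a Lie superalgebra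
`g` and `M` a simple g-module on which every element of `I` acts nilpotently,
then `I · M = 0`. -/
theorem graded_ideal_acts_trivially
    {F : Type} [Field F] [IsAlgClosed F] (p : ℕ) [Fact p.Prime] (hp : 2 < p) [CharP F p]
    -- the Lie superalgebra g
    {g : Type} [AddCommGroup g] [Module F g]
    (bra : g →ₗ[F] g →ₗ[F] g)
    (ggr : ZMod 2 → Submodule F g) (hgg : DirectSum.IsInternal ggr)
    (hbgr : ∀ i j : ZMod 2, ∀ x ∈ ggr i, ∀ y ∈ ggr j, bra x y ∈ ggr (i + j))
    (hskew : ∀ i j : ZMod 2, ∀ x ∈ ggr i, ∀ y ∈ ggr j,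
      bra x y = (-((-1 : F) ^ (i.val * j.val))) • bra y x)
    (hjac : ∀ i j : ZMod 2, ∀ x ∈ ggr i, ∀ y ∈ ggr j, ∀ z : g,
      bra x (bra y z) = bra (bra x y) z + ((-1 : F) ^ (i.val * j.val)) • bra y (bra x z))
    -- a finite-dimensional Z/2-graded ideal I of g
    (I : Submodule F g) [FiniteDimensional F ↥I]
    (hIdeal : ∀ x : g, ∀ y ∈ I, bra x y ∈ I)
    (hIgraded : I = (I ⊓ ggr 0) ⊔ (I ⊓ ggr 1))
    -- a simple Z/2-graded g-module M
    {M : Type} [AddCommGroup M] [Module F M]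
    (Mgr : ZMod 2 → Submodule F M) (hMg : DirectSum.IsInternal Mgr)
    (ρ : g →ₗ[F] Module.End F M)
    (hρgr : ∀ i j : ZMod 2, ∀ x ∈ ggr i, ∀ m ∈ Mgr j, ρ x m ∈ Mgr (i + j))
    (hρbra : ∀ i j : ZMod 2, ∀ x ∈ ggr i, ∀ y ∈ ggr j,
      ρ (bra x y) = ρ x * ρ y - ((-1 : F) ^ (i.val * j.val)) • (ρ y * ρ x))
    (hMne : (⊤ : Submodule F M) ≠ ⊥)
    (hsimple : ∀ N : Submodule F M, (∀ x : g, ∀ m ∈ N, ρ x m ∈ N) →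
      N = (N ⊓ Mgr 0) ⊔ (N ⊓ Mgr 1) → N = ⊥ ∨ N = ⊤)
    -- every element of I acts nilpotently
    (hnil : ∀ x ∈ I, IsNilpotent (ρ x)) :
    ∀ x ∈ I, ∀ m : M, ρ x m = 0 := by
  classical
  -- characteristic facts
  have htwo : (2:F) ≠ 0 := by
    have h2 : ((2:ℕ):F) = (2:F) := by norm_num
    rw [← h2, Ne, CharP.cast_eq_zero_iff F p 2]
    intro hdvd
    have := Nat.le_of_dvd (by norm_num) hdvd
    omega
  -- decompositions
  have hcases : ∀ i : ZMod 2, i = 0 ∨ i = 1 := by decide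
  have hgtop : ∀ z : g, ∃ z0 ∈ ggr 0, ∃ z1 ∈ ggr 1, z = z0 + z1 := by
    intro z
    have hsup : ggr 0 ⊔ ggr 1 = ⊤ := by
      refine le_antisymm le_top ?_
      rw [← hgg.submodule_iSup_eq_top]
      refine iSup_le fun i => ?_
      rcases hcases i with h | h <;> rw [h]
      · exact le_sup_left
      · exact le_sup_right
    have hz : z ∈ ggr 0 ⊔ ggr 1 := by rw [hsup]; trivial
    obtain ⟨z0, h0, z1, h1, hz⟩ := Submodule.mem_sup.mp hz
    exact ⟨z0, h0, z1, h1, hz.symm⟩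
  have hIdec : ∀ x ∈ I, ∃ x0 ∈ I ⊓ ggr 0, ∃ x1 ∈ I ⊓ ggr 1, x = x0 + x1 := by
    intro x hx
    rw [hIgraded] at hx
    obtain ⟨x0, h0, x1, h1, hx⟩ := Submodule.mem_sup.mp hx
    exact ⟨x0, h0, x1, h1, hx.symm⟩
  -- grading separation in M
  have hMsep : ∀ (a b : ZMod 2), a ≠ b → ∀ u ∈ Mgr a, ∀ v ∈ Mgr b, u + v = 0 → u = 0 ∧ v = 0 := by
    intro a b hab u hu v hv huv
    have hdis : Disjoint (Mgr a) (⨆ j, ⨆ _ : j ≠ a, Mgr j) := hMg.submodule_iSupIndep a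
    have hble : Mgr b ≤ ⨆ j, ⨆ _ : j ≠ a, Mgr j :=
      le_iSup_of_le b (le_iSup_of_le (Ne.symm hab) le_rfl)
    have huv' : u = -v := eq_neg_of_add_eq_zero_left huv
    have hu' : u ∈ ⨆ j, ⨆ _ : j ≠ a, Mgr j := by
      rw [huv']
      exact hble (Submodule.neg_mem _ hv)
    have hu0 : u = 0 := Submodule.disjoint_def.mp hdis u hu hu'
    refine ⟨hu0, ?_⟩
    rw [hu0, zero_add] at huv
    exact huv
  -- the even and odd parts of the image of I
  set R : Submodule F (Module.End F M) := Submodule.map ρ (I ⊓ ggr 0) with hR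
  set V : Submodule F (Module.End F M) := Submodule.map ρ (I ⊓ ggr 1) with hV
  haveI h0fd : FiniteDimensional F ↥(I ⊓ ggr 0) := Submodule.finiteDimensional_of_le inf_le_left
  haveI h1fd : FiniteDimensional F ↥(I ⊓ ggr 1) := Submodule.finiteDimensional_of_le inf_le_left
  haveI hRfd : FiniteDimensional F ↥R := inferInstance
  haveI hVfd : FiniteDimensional F ↥V := inferInstance
  -- sign simplifications
  have hval00 : ((0 : ZMod 2).val * (0 : ZMod 2).val) = 0 := by decide
  have hval01 : ((0 : ZMod 2).val * (1 : ZMod 2).val) = 0 := by decide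
  have hval11 : ((1 : ZMod 2).val * (1 : ZMod 2).val) = 1 := by decide
  have hadd00 : (0 : ZMod 2) + 0 = 0 := by decide
  have hadd01 : (0 : ZMod 2) + 1 = 1 := by decide
  have hadd11 : (1 : ZMod 2) + 1 = 0 := by decide
  have hRR : ∀ r ∈ R, ∀ r' ∈ R, r * r' - r' * r ∈ R := by
    rintro _ ⟨x, hx, rfl⟩ _ ⟨y, hy, rfl⟩
    have heq := hρbra 0 0 x hx.2 y hy.2
    rw [hval00, pow_zero, one_smul] at heq
    rw [← heq]
    exact ⟨bra x y, ⟨hIdeal x y hy.1, hadd00 ▸ hbgr 0 0 x hx.2 y hy.2⟩, rfl⟩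
  have hRV : ∀ r ∈ R, ∀ v ∈ V, r * v - v * r ∈ V := by
    rintro _ ⟨x, hx, rfl⟩ _ ⟨y, hy, rfl⟩
    have heq := hρbra 0 1 x hx.2 y hy.2
    rw [hval01, pow_zero, one_smul] at heq
    rw [← heq]
    exact ⟨bra x y, ⟨hIdeal x y hy.1, hadd01 ▸ hbgr 0 1 x hx.2 y hy.2⟩, rfl⟩
  have hVV : ∀ u ∈ V, ∀ v ∈ V, u * v + v * u ∈ R := by
    rintro _ ⟨x, hx, rfl⟩ _ ⟨y, hy, rfl⟩
    have heq := hρbra 1 1 x hx.2 y hy.2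
    rw [hval11, pow_one] at heq
    have heq2 : ρ (bra x y) = ρ x * ρ y + ρ y * ρ x := by
      rw [heq, neg_smul, one_smul, sub_neg_eq_add]
    rw [← heq2]
    exact ⟨bra x y, ⟨hIdeal x y hy.1, hadd11 ▸ hbgr 1 1 x hx.2 y hy.2⟩, rfl⟩
  have hnR : ∀ r ∈ R, IsNilpotent r := by
    rintro _ ⟨x, hx, rfl⟩
    exact hnil x hx.1
  have hm0 : ∃ m : M, m ≠ 0 := by
    obtain ⟨m, -, hm⟩ := (Submodule.ne_bot_iff _).mp hMne
    exact ⟨m, hm⟩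
  obtain ⟨m₀, hm₀, hm₀R, hm₀V⟩ := super_engel htwo R V hRR hRV hVV hnR hm0
  -- the annihilator of I in M
  let N : Submodule F M :=
    { carrier := {m : M | ∀ x ∈ I, ρ x m = 0}
      add_mem' := by
        intro a b ha hb x hx
        rw [map_add, ha x hx, hb x hx, add_zero]
      zero_mem' := by
        intro x hx
        exact map_zero (ρ x)
      smul_mem' := by
        intro c a ha x hx
        rw [map_smul, ha x hx, smul_zero] }
  have hmemN : ∀ m : M, m ∈ N ↔ ∀ x ∈ I, ρ x m = 0 := fun m => Iff.rfl
  -- m₀ is in N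
  have hm₀N : m₀ ∈ N := by
    intro x hx
    obtain ⟨x0, h0, x1, h1, rfl⟩ := hIdec x hx
    rw [map_add, LinearMap.add_apply]
    have e0 : ρ x0 m₀ = 0 := hm₀R _ ⟨x0, h0, rfl⟩
    have e1 : ρ x1 m₀ = 0 := hm₀V _ ⟨x1, h1, rfl⟩
    rw [e0, e1, add_zero]
  have hNbot : N ≠ ⊥ := by
    intro h
    rw [h] at hm₀N
    exact hm₀ hm₀N
  -- N is invariant (key homogeneous computation)
  have hkey : ∀ (i jj : ZMod 2), ∀ x, x ∈ I → x ∈ ggr i → ∀ z ∈ ggr jj, ∀ m ∈ N,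
      ρ x (ρ z m) = 0 := by
    intro i jj x hxI hxg z hz m hm
    have heq := hρbra i jj x hxg z hz
    have hbxz : bra x z ∈ I := by
      rw [hskew i jj x hxg z hz]
      exact Submodule.smul_mem _ _ (hIdeal z x hxI)
    have happ : ρ (bra x z) m = ρ x (ρ z m) - ((-1:F) ^ (i.val * jj.val)) • (ρ z (ρ x m)) := by
      rw [heq]
      rw [LinearMap.sub_apply, LinearMap.smul_apply, Module.End.mul_apply, Module.End.mul_apply]
    have h1 : ρ (bra x z) m = 0 := hm _ hbxz
    have h2 : ρ x m = 0 := hm _ hxI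
    rw [h1, h2, map_zero, smul_zero, sub_zero] at happ
    exact happ.symm
  have hNinv : ∀ x : g, ∀ m ∈ N, ρ x m ∈ N := by
    intro z m hm x hx
    obtain ⟨z0, hz0, z1, hz1, rfl⟩ := hgtop z
    obtain ⟨x0, hx0, x1, hx1, rfl⟩ := hIdec x hx
    simp only [map_add, LinearMap.add_apply]
    have e00 : ρ x0 (ρ z0 m) = 0 := hkey 0 0 x0 hx0.1 hx0.2 z0 hz0 m hm
    have e01 : ρ x0 (ρ z1 m) = 0 := hkey 0 1 x0 hx0.1 hx0.2 z1 hz1 m hm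
    have e10 : ρ x1 (ρ z0 m) = 0 := hkey 1 0 x1 hx1.1 hx1.2 z0 hz0 m hm
    have e11 : ρ x1 (ρ z1 m) = 0 := hkey 1 1 x1 hx1.1 hx1.2 z1 hz1 m hm
    rw [e00, e01, e10, e11]
    simp
  -- N is graded
  have hMtop : ∀ m : M, ∃ m0 ∈ Mgr 0, ∃ m1 ∈ Mgr 1, m = m0 + m1 := by
    intro m
    have hsup : Mgr 0 ⊔ Mgr 1 = ⊤ := by
      refine le_antisymm le_top ?_
      rw [← hMg.submodule_iSup_eq_top]
      refine iSup_le fun i => ?_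
      rcases hcases i with h | h <;> rw [h]
      · exact le_sup_left
      · exact le_sup_right
    have hz : m ∈ Mgr 0 ⊔ Mgr 1 := by rw [hsup]; trivial
    obtain ⟨m0, h0, m1, h1, hz⟩ := Submodule.mem_sup.mp hz
    exact ⟨m0, h0, m1, h1, hz.symm⟩
  have hNgr : N = (N ⊓ Mgr 0) ⊔ (N ⊓ Mgr 1) := by
    refine le_antisymm ?_ (sup_le inf_le_left inf_le_left)
    intro m hm
    obtain ⟨m0, h0, m1, h1, rfl⟩ := hMtop m
    have hcomp : ∀ (i : ZMod 2), ∀ x, x ∈ I → x ∈ ggr i → ρ x m0 = 0 ∧ ρ x m1 = 0 := by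
      intro i x hxI hxg
      have hsum : ρ x m0 + ρ x m1 = 0 := by
        rw [← map_add]
        exact hm x hxI
      have hne : i + 0 ≠ i + 1 := by
        intro h
        have := add_left_cancel h
        simp at this
      exact hMsep (i+0) (i+1) hne _ (hρgr i 0 x hxg m0 h0) _ (hρgr i 1 x hxg m1 h1) hsum
    have hm0N : m0 ∈ N := by
      intro x hx
      obtain ⟨x0, hx0, x1, hx1, rfl⟩ := hIdec x hx
      rw [map_add, LinearMap.add_apply]
      rw [(hcomp 0 x0 hx0.1 hx0.2).1, (hcomp 1 x1 hx1.1 hx1.2).1, add_zero]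
    have hm1N : m1 ∈ N := by
      intro x hx
      obtain ⟨x0, hx0, x1, hx1, rfl⟩ := hIdec x hx
      rw [map_add, LinearMap.add_apply]
      rw [(hcomp 0 x0 hx0.1 hx0.2).2, (hcomp 1 x1 hx1.1 hx1.2).2, add_zero]
    exact Submodule.mem_sup.mpr ⟨m0, ⟨hm0N, h0⟩, m1, ⟨hm1N, h1⟩, rfl⟩
  rcases hsimple N hNinv hNgr with h | h
  · exact absurd h hNbot
  · intro x hx m
    have : m ∈ N := by rw [h]; trivial
    exact this x hx
end

section
/- Let g = gl(m|n) = g₋₁ ⊕ g₀ ⊕ g₁ with its Z-grading, χ ∈ g₀* with χ(N₀⁺) = 0, M a simple u(g₀,χ)-module viewed as a u(g₀ ⊕ g₁,χ)-module with g₁M = 0, and Z^χ(M) = u(g,χ) ⊗_{u(g₀⊕g₁,χ)} M the graded baby Verma module. If the element e₁⋯e_l f₁⋯f_l (product over bases of g₁ and g₋₁ in ascending height order) acts on a maximal vector v ∈ M by a nonzero scalar f₁(λ), then Z^χ(M) is simple. -/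
/-! The general linear Lie superalgebra gl(m|n) realized concretely as
(m+n)×(m+n) matrices, with its Z/2-grading and super bracket. -/

/-- Parity of an index: `0` for the first `m` indices, `1` for the last `n`. -/
def glPar (m n : ℕ) (k : Fin (m + n)) : ZMod 2 := if (k : ℕ) < m then 0 else 1

/-- Matrix units, the standard basis of gl(m|n). -/
def glE (F : Type) [Field F] (m n : ℕ) (k l : Fin (m + n)) :
    Matrix (Fin (m + n)) (Fin (m + n)) F := Matrix.single k l 1

/-- The Z/2-grading of gl(m|n). -/
def glGr (F : Type) [Field F] (m n : ℕ) (i : ZMod 2) :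
    Submodule F (Matrix (Fin (m + n)) (Fin (m + n)) F) where
  carrier := {X | ∀ k l, glPar m n k + glPar m n l ≠ i → X k l = 0}
  add_mem' := by intro a b ha hb k l h; simp [Matrix.add_apply, ha k l h, hb k l h]
  zero_mem' := by intro k l h; simp
  smul_mem' := by intro c X hX k l h; simp [Matrix.smul_apply, hX k l h]

/-- The odd component of a matrix. -/
def glOdd (F : Type) [Field F] (m n : ℕ) (X : Matrix (Fin (m + n)) (Fin (m + n)) F) :
    Matrix (Fin (m + n)) (Fin (m + n)) F :=
  Matrix.of fun k l => if glPar m n k + glPar m n l = 1 then X k l else 0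

/-- The super bracket of gl(m|n): on homogeneous X, Y it is XY − (−1)^{p(X)p(Y)}YX. -/
def glBra (F : Type) [Field F] (m n : ℕ) (X Y : Matrix (Fin (m + n)) (Fin (m + n)) F) :
    Matrix (Fin (m + n)) (Fin (m + n)) F :=
  X * Y - Y * X + 2 • (glOdd F m n Y * glOdd F m n X)

namespace GBV

variable {F : Type} [Field F] {m n : ℕ}

abbrev Q (m n : ℕ) := Fin m × Fin n

def Fmat (F : Type) [Field F] (m n : ℕ) (q : Q m n) :
    Matrix (Fin (m + n)) (Fin (m + n)) F := glE F m n (Fin.natAdd m q.2) (Fin.castAdd n q.1)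

def Emat (F : Type) [Field F] (m n : ℕ) (q : Q m n) :
    Matrix (Fin (m + n)) (Fin (m + n)) F := glE F m n (Fin.castAdd n q.1) (Fin.natAdd m q.2)

lemma glE_apply (k l a b : Fin (m + n)) :
    glE F m n k l a b = if k = a ∧ l = b then 1 else 0 := by
  rw [glE, Matrix.single, Matrix.of_apply]

lemma par_castAdd (a : Fin m) : glPar m n (Fin.castAdd n a) = 0 := by
  simp [glPar, a.isLt]

lemma par_natAdd (b : Fin n) : glPar m n (Fin.natAdd m b) = 1 := by
  simp [glPar]

lemma zmod2_cases (i : ZMod 2) : i = 0 ∨ i = 1 := by revert i; decide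

lemma Fmat_mem (q : Q m n) : Fmat F m n q ∈ glGr F m n 1 := by
  intro k l h
  rw [Fmat, glE_apply]
  split
  · next heq =>
    exfalso; apply h
    rw [← heq.1, ← heq.2, par_natAdd, par_castAdd]; decide
  · rfl

lemma Emat_mem (q : Q m n) : Emat F m n q ∈ glGr F m n 1 := by
  intro k l h
  rw [Emat, glE_apply]
  split
  · next heq =>
    exfalso; apply h
    rw [← heq.1, ← heq.2, par_castAdd, par_natAdd]; decide
  · rfl

lemma glOdd_eq_self {X : Matrix (Fin (m + n)) (Fin (m + n)) F}
    (hX : X ∈ glGr F m n 1) : glOdd F m n X = X := by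
  ext k l
  rw [glOdd, Matrix.of_apply]
  split
  · rfl
  · next h => exact (hX k l h).symm

lemma glOdd_eq_zero {X : Matrix (Fin (m + n)) (Fin (m + n)) F}
    (hX : X ∈ glGr F m n 0) : glOdd F m n X = 0 := by
  ext k l
  rw [glOdd, Matrix.of_apply]
  split
  · next h => exact hX k l (by rw [h]; decide)
  · rfl

lemma bra_FF (q r : Q m n) : glBra F m n (Fmat F m n q) (Fmat F m n r) = 0 := by
  have h1 : Fmat F m n q * Fmat F m n r = 0 := by
    apply Matrix.single_mul_single_of_ne
    intro h
    have := congrArg Fin.val h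
    simp [Fin.coe_castAdd, Fin.coe_natAdd] at this
    omega
  have h2 : Fmat F m n r * Fmat F m n q = 0 := by
    apply Matrix.single_mul_single_of_ne
    intro h
    have := congrArg Fin.val h
    simp [Fin.coe_castAdd, Fin.coe_natAdd] at this
    omega
  rw [glBra, glOdd_eq_self (Fmat_mem q), glOdd_eq_self (Fmat_mem r), h1, h2]
  simp

lemma braEF_mem (q r : Q m n) :
    glBra F m n (Emat F m n q) (Fmat F m n r) ∈ glGr F m n 0 := by
  rw [glBra, glOdd_eq_self (Fmat_mem r), glOdd_eq_self (Emat_mem q)]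
  have hEF : Emat F m n q * Fmat F m n r ∈ glGr F m n 0 := by
    by_cases h : Fin.natAdd m q.2 = Fin.natAdd m r.2
    · rw [Emat, Fmat, glE, glE, h, Matrix.single_mul_single_same]
      intro k l hkl
      rw [Matrix.single, Matrix.of_apply]
      split
      · next heq => exact absurd (by rw [← heq.1, ← heq.2, par_castAdd, par_castAdd]; decide) hkl
      · rfl
    · rw [Emat, Fmat, glE, glE, Matrix.single_mul_single_of_ne (h := h)]
      exact Submodule.zero_mem _
  have hFE : Fmat F m n r * Emat F m n q ∈ glGr F m n 0 := by
    by_cases h : Fin.castAdd n r.1 = Fin.castAdd n q.1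
    · rw [Emat, Fmat, glE, glE, h, Matrix.single_mul_single_same]
      intro k l hkl
      rw [Matrix.single, Matrix.of_apply]
      split
      · next heq => exact absurd (by rw [← heq.1, ← heq.2, par_natAdd, par_natAdd]; decide) hkl
      · rfl
    · rw [Emat, Fmat, glE, glE, Matrix.single_mul_single_of_ne (h := h)]
      exact Submodule.zero_mem _
  have : Emat F m n q * Fmat F m n r - Fmat F m n r * Emat F m n q
      + 2 • (Fmat F m n r * Emat F m n q) ∈ glGr F m n 0 := by
    apply Submodule.add_mem _ (Submodule.sub_mem _ hEF hFE)
    rw [two_nsmul]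
    exact Submodule.add_mem _ hFE hFE
  exact this

end GBV

namespace GBV2
open GBV

variable {F : Type} [Field F] {m n : ℕ}

/-- Expansion of a lower-left supported matrix in terms of `Fmat`. -/
lemma LL_expand {Y : Matrix (Fin (m + n)) (Fin (m + n)) F}
    (hY : ∀ k l, Y k l ≠ 0 → ¬((k : ℕ) < m) ∧ (l : ℕ) < m) :
    Y = ∑ r : Q m n, Y (Fin.natAdd m r.2) (Fin.castAdd n r.1) • Fmat F m n r := by
  ext k l
  rw [Matrix.sum_apply]
  by_cases hk : (k : ℕ) < m
  · have hYkl : Y k l = 0 := by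
      by_contra h; exact (hY k l h).1 hk
    rw [hYkl]
    apply (Finset.sum_eq_zero _).symm
    intro r _
    rw [Matrix.smul_apply, Fmat, glE_apply]
    split
    · next heq =>
      exfalso
      have := congrArg Fin.val heq.1
      simp [Fin.coe_natAdd] at this
      omega
    · simp
  · by_cases hl : (l : ℕ) < m
    · have hkn : (k : ℕ) - m < n := by have := k.isLt; omega
      rw [Finset.sum_eq_single (⟨⟨(l : ℕ), hl⟩, ⟨(k : ℕ) - m, hkn⟩⟩ : Q m n)]
      · rw [Matrix.smul_apply, Fmat, glE_apply]
        have h1 : Fin.natAdd m (⟨(k : ℕ) - m, hkn⟩ : Fin n) = k := by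
          apply Fin.ext; simp [Fin.coe_natAdd]; omega
        have h2 : Fin.castAdd n (⟨(l : ℕ), hl⟩ : Fin m) = l := by
          apply Fin.ext; simp
        rw [h1, h2]
        simp
      · intro r _ hr
        rw [Matrix.smul_apply, Fmat, glE_apply]
        split
        · next heq =>
          exfalso
          apply hr
          have e1 := congrArg Fin.val heq.1
          have e2 := congrArg Fin.val heq.2
          simp [Fin.coe_natAdd, Fin.coe_castAdd] at e1 e2
          have : r.2 = (⟨(k : ℕ) - m, hkn⟩ : Fin n) := by apply Fin.ext; simp; omega
          have h2 : r.1 = (⟨(l : ℕ), hl⟩ : Fin m) := by apply Fin.ext; simp [e2]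
          rw [Prod.ext_iff]; exact ⟨h2, this⟩
        · simp
      · intro h; exact absurd (Finset.mem_univ _) h
    · have hYkl : Y k l = 0 := by
        by_contra h; exact hl (hY k l h).2
      rw [hYkl]
      apply (Finset.sum_eq_zero _).symm
      intro r _
      rw [Matrix.smul_apply, Fmat, glE_apply]
      split
      · next heq =>
        exfalso
        have := congrArg Fin.val heq.2
        simp [Fin.coe_castAdd] at this
        have := r.1.isLt
        omega
      · simp

/-- Expansion of an upper-right supported matrix in terms of `Emat`. -/
lemma UR_expand {Y : Matrix (Fin (m + n)) (Fin (m + n)) F}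
    (hY : ∀ k l, Y k l ≠ 0 → (k : ℕ) < m ∧ ¬((l : ℕ) < m)) :
    Y = ∑ r : Q m n, Y (Fin.castAdd n r.1) (Fin.natAdd m r.2) • Emat F m n r := by
  ext k l
  rw [Matrix.sum_apply]
  by_cases hk : (k : ℕ) < m
  · by_cases hl : (l : ℕ) < m
    · have hYkl : Y k l = 0 := by
        by_contra h; exact (hY k l h).2 hl
      rw [hYkl]
      apply (Finset.sum_eq_zero _).symm
      intro r _
      rw [Matrix.smul_apply, Emat, glE_apply]
      split
      · next heq =>
        exfalso
        have := congrArg Fin.val heq.2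
        simp [Fin.coe_natAdd] at this
        omega
      · simp
    · have hln : (l : ℕ) - m < n := by have := l.isLt; omega
      rw [Finset.sum_eq_single (⟨⟨(k : ℕ), hk⟩, ⟨(l : ℕ) - m, hln⟩⟩ : Q m n)]
      · rw [Matrix.smul_apply, Emat, glE_apply]
        have h1 : Fin.castAdd n (⟨(k : ℕ), hk⟩ : Fin m) = k := by
          apply Fin.ext; simp
        have h2 : Fin.natAdd m (⟨(l : ℕ) - m, hln⟩ : Fin n) = l := by
          apply Fin.ext; simp [Fin.coe_natAdd]; omega
        rw [h1, h2]
        simp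
      · intro r _ hr
        rw [Matrix.smul_apply, Emat, glE_apply]
        split
        · next heq =>
          exfalso
          apply hr
          have e1 := congrArg Fin.val heq.1
          have e2 := congrArg Fin.val heq.2
          simp [Fin.coe_natAdd, Fin.coe_castAdd] at e1 e2
          have h1 : r.1 = (⟨(k : ℕ), hk⟩ : Fin m) := by apply Fin.ext; simp [e1]
          have h2 : r.2 = (⟨(l : ℕ) - m, hln⟩ : Fin n) := by apply Fin.ext; simp; omega
          rw [Prod.ext_iff]; exact ⟨h1, h2⟩
        · simp
      · intro h; exact absurd (Finset.mem_univ _) h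
  · have hYkl : Y k l = 0 := by
      by_contra h; exact hk (hY k l h).1
    rw [hYkl]
    apply (Finset.sum_eq_zero _).symm
    intro r _
    rw [Matrix.smul_apply, Emat, glE_apply]
    split
    · next heq =>
      exfalso
      have := congrArg Fin.val heq.1
      simp [Fin.coe_castAdd] at this
      have := r.1.isLt
      omega
    · simp

/-- The bracket of an even matrix with `Fmat q` is lower-left supported. -/
lemma braXF_support {X : Matrix (Fin (m + n)) (Fin (m + n)) F} (hX : X ∈ glGr F m n 0)
    (q : Q m n) :
    ∀ k l, glBra F m n X (Fmat F m n q) k l ≠ 0 → ¬((k : ℕ) < m) ∧ (l : ℕ) < m := by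
  intro k l h
  rw [glBra, glOdd_eq_zero hX] at h
  have hmul0 : glOdd F m n (Fmat F m n q) * 0 = 0 := by rw [mul_zero]
  rw [hmul0] at h
  have h' : (X * Fmat F m n q - Fmat F m n q * X) k l ≠ 0 := by
    simpa using h
  -- entries of the two products
  have hXF : (X * Fmat F m n q) k l
      = if Fin.castAdd n q.1 = l then X k (Fin.natAdd m q.2) else 0 := by
    rw [Matrix.mul_apply]
    rw [Finset.sum_eq_single (Fin.natAdd m q.2)]
    · rw [Fmat, glE_apply]
      by_cases hc : Fin.castAdd n q.1 = l
      · simp [hc]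
      · simp [hc]
    · intro j _ hj
      rw [Fmat, glE_apply]
      split
      · next heq => exact absurd heq.1.symm hj
      · rw [mul_zero]
    · intro hj; exact absurd (Finset.mem_univ _) hj
  have hFX : (Fmat F m n q * X) k l
      = if Fin.natAdd m q.2 = k then X (Fin.castAdd n q.1) l else 0 := by
    rw [Matrix.mul_apply]
    rw [Finset.sum_eq_single (Fin.castAdd n q.1)]
    · rw [Fmat, glE_apply]
      by_cases hc : Fin.natAdd m q.2 = k
      · simp [hc]
      · simp [hc]
    · intro j _ hj
      rw [Fmat, glE_apply]
      split
      · next heq => exact absurd heq.2.symm hj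
      · rw [zero_mul]
    · intro hj; exact absurd (Finset.mem_univ _) hj
  rw [Matrix.sub_apply, hXF, hFX] at h'
  constructor
  · -- k is in the lower range
    intro hk
    apply h'
    have hparl : glPar m n k = 0 := by simp [glPar, hk]
    have h1 : (if Fin.castAdd n q.1 = l then X k (Fin.natAdd m q.2) else 0) = 0 := by
      split
      · apply hX
        rw [hparl, par_natAdd]; decide
      · rfl
    have h2 : (if Fin.natAdd m q.2 = k then X (Fin.castAdd n q.1) l else 0) = 0 := by
      split
      · next heq =>
        exfalso
        have := congrArg Fin.val heq
        simp [Fin.coe_natAdd] at this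
        omega
      · rfl
    rw [h1, h2, sub_zero]
  · -- l is in the upper range
    by_contra hl
    apply h'
    have hparl : glPar m n l = 1 := by simp [glPar, hl]
    have h1 : (if Fin.castAdd n q.1 = l then X k (Fin.natAdd m q.2) else 0) = 0 := by
      split
      · next heq =>
        exfalso
        have := congrArg Fin.val heq
        simp [Fin.coe_castAdd] at this
        have := q.1.isLt
        omega
      · rfl
    have h2 : (if Fin.natAdd m q.2 = k then X (Fin.castAdd n q.1) l else 0) = 0 := by
      split
      · apply hX
        rw [par_castAdd, hparl]; decide
      · rfl
    rw [h1, h2, sub_zero]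

/-- Decomposition of an arbitrary matrix into even, lower-left and upper-right parts. -/
lemma matrix_decomp (X : Matrix (Fin (m + n)) (Fin (m + n)) F) :
    ∃ X0 ∈ glGr F m n 0, ∃ cL cU : Q m n → F,
      X = X0 + (∑ q : Q m n, cL q • Fmat F m n q) + (∑ q : Q m n, cU q • Emat F m n q) := by
  classical
  set Xll : Matrix (Fin (m + n)) (Fin (m + n)) F :=
    Matrix.of fun k l => if ¬((k : ℕ) < m) ∧ (l : ℕ) < m then X k l else 0 with hXll
  set Xur : Matrix (Fin (m + n)) (Fin (m + n)) F :=
    Matrix.of fun k l => if (k : ℕ) < m ∧ ¬((l : ℕ) < m) then X k l else 0 with hXur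
  set X0 : Matrix (Fin (m + n)) (Fin (m + n)) F := X - Xll - Xur with hX0
  have hX0mem : X0 ∈ glGr F m n 0 := by
    intro k l h
    rw [hX0]
    simp only [Matrix.sub_apply, hXll, hXur, Matrix.of_apply]
    by_cases hk : (k : ℕ) < m <;> by_cases hl : (l : ℕ) < m
    · exfalso; apply h; simp [glPar, hk, hl]
    · simp [hk, hl]
    · simp [hk, hl]
    · exfalso; apply h; simp [glPar, hk, hl]; decide
  refine ⟨X0, hX0mem, fun q => Xll (Fin.natAdd m q.2) (Fin.castAdd n q.1),
    fun q => Xur (Fin.castAdd n q.1) (Fin.natAdd m q.2), ?_⟩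
  have hll : Xll = ∑ q : Q m n, Xll (Fin.natAdd m q.2) (Fin.castAdd n q.1) • Fmat F m n q := by
    apply LL_expand
    intro k l h
    by_contra hcon
    apply h
    rw [hXll]
    simp only [Matrix.of_apply]
    rw [if_neg hcon]
  have hur : Xur = ∑ q : Q m n, Xur (Fin.castAdd n q.1) (Fin.natAdd m q.2) • Emat F m n q := by
    apply UR_expand
    intro k l h
    by_contra hcon
    apply h
    rw [hXur]
    simp only [Matrix.of_apply]
    rw [if_neg hcon]
  rw [← hll, ← hur, hX0]
  abel

end GBV2

namespace GBV3
open GBV GBV2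

variable {F : Type} [Field F] {m n : ℕ}
variable {Z : Type} [AddCommGroup Z] [Module F Z]

/-- The operator corresponding to a negative root vector. -/
def fop (σ : Matrix (Fin (m + n)) (Fin (m + n)) F →ₗ[F] Module.End F Z) (q : Q m n) :
    Module.End F Z := σ (Fmat F m n q)

/-- The operator corresponding to a positive odd root vector. -/
def eop (σ : Matrix (Fin (m + n)) (Fin (m + n)) F →ₗ[F] Module.End F Z) (q : Q m n) :
    Module.End F Z := σ (Emat F m n q)

/-- Product of `fop`s over a list. -/
def Fprod (σ : Matrix (Fin (m + n)) (Fin (m + n)) F →ₗ[F] Module.End F Z)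
    (s : List (Q m n)) : Module.End F Z := (s.map (fop σ)).prod

variable (σ : Matrix (Fin (m + n)) (Fin (m + n)) F →ₗ[F] Module.End F Z)

lemma Fprod_nil : Fprod σ ([] : List (Q m n)) = 1 := rfl

lemma Fprod_cons (q : Q m n) (s : List (Q m n)) :
    Fprod σ (q :: s) = fop σ q * Fprod σ s := by
  rw [Fprod, List.map_cons, List.prod_cons]; rfl

lemma Fprod_append (s t : List (Q m n)) :
    Fprod σ (s ++ t) = Fprod σ s * Fprod σ t := by
  rw [Fprod, List.map_append, List.prod_append]; rfl

section bra

variable (hbra : ∀ i j : ZMod 2, ∀ X ∈ glGr F m n i, ∀ Y ∈ glGr F m n j,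
      σ (glBra F m n X Y) = σ X * σ Y - ((-1 : F) ^ (i.val * j.val)) • (σ Y * σ X))

include hbra

lemma fop_fop (q r : Q m n) : fop σ q * fop σ r = -(fop σ r * fop σ q) := by
  have h := hbra 1 1 (Fmat F m n q) (Fmat_mem q) (Fmat F m n r) (Fmat_mem r)
  rw [bra_FF, map_zero] at h
  have hval : ((1 : ZMod 2).val * (1 : ZMod 2).val) = 1 := by decide
  rw [hval, pow_one] at h
  have := h.symm
  rw [sub_eq_zero] at this
  rw [fop, fop]
  rw [this]
  simp

lemma fop_sq (h2 : (2 : F) ≠ 0) (q : Q m n) : fop σ q * fop σ q = 0 := by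
  have h := fop_fop σ hbra q q
  have h' : fop σ q * fop σ q + fop σ q * fop σ q = 0 := by
    nth_rewrite 1 [h]; simp
  have h2' : (2 : F) • (fop σ q * fop σ q) = 0 := by
    rw [two_smul]; exact h'
  exact (smul_eq_zero.mp h2').resolve_left h2

lemma Fprod_perm {s s' : List (Q m n)} (hperm : s.Perm s') :
    ∃ c : F, c ≠ 0 ∧ Fprod σ s = c • Fprod σ s' := by
  induction hperm with
  | nil => exact ⟨1, one_ne_zero, by simp⟩
  | cons x h ih =>
    obtain ⟨c, hc, heq⟩ := ih
    exact ⟨c, hc, by rw [Fprod_cons, Fprod_cons, heq, mul_smul_comm]⟩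
  | swap x y l =>
    refine ⟨-1, by simp, ?_⟩
    rw [Fprod_cons, Fprod_cons, Fprod_cons, Fprod_cons, ← mul_assoc, ← mul_assoc,
      fop_fop σ hbra y x]
    simp
  | trans h1 h2 ih1 ih2 =>
    obtain ⟨c1, hc1, he1⟩ := ih1
    obtain ⟨c2, hc2, he2⟩ := ih2
    exact ⟨c1 * c2, mul_ne_zero hc1 hc2, by rw [he1, he2, smul_smul]⟩

lemma Fprod_dup (h2 : (2 : F) ≠ 0) {s : List (Q m n)} (hs : ¬ s.Nodup) :
    Fprod σ s = 0 := by
  classical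
  induction s with
  | nil => exact absurd List.nodup_nil hs
  | cons a t ih =>
    by_cases ha : a ∈ t
    · obtain ⟨c, hc, heq⟩ := Fprod_perm σ hbra (List.perm_cons_erase ha)
      rw [Fprod_cons, heq, Fprod_cons, mul_smul_comm, ← mul_assoc,
        fop_sq σ hbra h2, zero_mul, smul_zero]
    · have : ¬ t.Nodup := by
        intro hnd; exact hs (List.nodup_cons.mpr ⟨ha, hnd⟩)
      rw [Fprod_cons, ih this, mul_zero]

/-- structure constants of the bracket of an even element against `Fmat q`. -/
noncomputable def cc (X : Matrix (Fin (m + n)) (Fin (m + n)) F) (r q : Q m n) : F :=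
  glBra F m n X (Fmat F m n q) (Fin.natAdd m r.2) (Fin.castAdd n r.1)

omit hbra in
lemma braXF_expand {X : Matrix (Fin (m + n)) (Fin (m + n)) F} (hX : X ∈ glGr F m n 0)
    (q : Q m n) :
    glBra F m n X (Fmat F m n q) = ∑ r : Q m n, cc X r q • Fmat F m n r :=
  LL_expand (braXF_support hX q)

lemma even_fop_comm {X : Matrix (Fin (m + n)) (Fin (m + n)) F} (hX : X ∈ glGr F m n 0)
    (q : Q m n) :
    σ X * fop σ q = fop σ q * σ X + ∑ r : Q m n, cc X r q • fop σ r := by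
  have h := hbra 0 1 X hX (Fmat F m n q) (Fmat_mem q)
  have hval : ((0 : ZMod 2).val * (1 : ZMod 2).val) = 0 := by decide
  rw [hval, pow_zero, one_smul] at h
  have hexp : σ (glBra F m n X (Fmat F m n q)) = ∑ r : Q m n, cc X r q • fop σ r := by
    rw [braXF_expand hX q, map_sum]
    congr 1
    ext r
    rw [map_smul]
    rfl
  rw [hexp] at h
  rw [fop]
  linear_combination (norm := (abel)) -h

/-- Commutation of an even operator with a product of `fop`s. -/
lemma even_Fprod_comm {X : Matrix (Fin (m + n)) (Fin (m + n)) F} (hX : X ∈ glGr F m n 0)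
    (s : List (Q m n)) :
    σ X * Fprod σ s = Fprod σ s * σ X +
      ∑ i : Fin s.length, ∑ r : Q m n, cc X r (s.get i) • Fprod σ (s.set i r) := by
  induction s with
  | nil => simp [Fprod_nil]
  | cons q u ih =>
    rw [Fprod_cons, ← mul_assoc, even_fop_comm σ hbra hX q, add_mul, mul_assoc, ih,
      mul_add, Finset.sum_mul]
    have hlen : (q :: u).length = u.length + 1 := rfl
    rw [show ∑ i : Fin (q :: u).length, ∑ r : Q m n,
          cc X r ((q :: u).get i) • Fprod σ ((q :: u).set i r)
        = ∑ i : Fin (u.length + 1), ∑ r : Q m n,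
          cc X r ((q :: u).get (Fin.cast hlen.symm i)) • Fprod σ ((q :: u).set i r) from by
      apply Finset.sum_equiv (finCongr hlen) (by simp) (by intros; rfl)]
    rw [Fin.sum_univ_succ]
    have h0 : ∑ r : Q m n, cc X r ((q :: u).get (Fin.cast hlen.symm 0)) • Fprod σ ((q :: u).set (((0 : Fin (u.length+1))) : ℕ) r)
        = ∑ r : Q m n, cc X r q • (fop σ r * Fprod σ u) := by
      apply Finset.sum_congr rfl
      intro r _
      rw [show ((q :: u).set (((0 : Fin (u.length+1))) : ℕ) r) = r :: u from rfl, Fprod_cons]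
      rfl
    have hsucc : ∀ i : Fin u.length,
        ∑ r : Q m n, cc X r ((q :: u).get (Fin.cast hlen.symm i.succ)) •
            Fprod σ ((q :: u).set (i.succ : ℕ) r)
        = ∑ r : Q m n, cc X r (u.get i) • (fop σ q * Fprod σ (u.set i r)) := by
      intro i
      apply Finset.sum_congr rfl
      intro r _
      have h1 : ((q :: u).set (i.succ : ℕ) r) = q :: u.set i r := by
        rw [Fin.val_succ]; rfl
      have h2 : ((q :: u).get (Fin.cast hlen.symm i.succ)) = u.get i := rfl
      rw [h1, h2, Fprod_cons]
    rw [h0]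
    rw [Finset.sum_congr rfl (fun i _ => hsucc i)]
    simp only [Finset.mul_sum, mul_smul_comm, smul_mul_assoc, mul_assoc]
    abel


lemma eop_fop_rel (q r : Q m n) :
    eop σ q * fop σ r = σ (glBra F m n (Emat F m n q) (Fmat F m n r)) - fop σ r * eop σ q := by
  have h := hbra 1 1 (Emat F m n q) (Emat_mem q) (Fmat F m n r) (Fmat_mem r)
  have hval : ((1 : ZMod 2).val * (1 : ZMod 2).val) = 1 := by decide
  rw [hval, pow_one] at h
  rw [h, eop, fop]
  simp only [neg_smul, one_smul, sub_neg_eq_add]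
  abel

lemma full_comm (h2 : (2 : F) ≠ 0) {X : Matrix (Fin (m + n)) (Fin (m + n)) F}
    (hX : X ∈ glGr F m n 0) {s : List (Q m n)} (hnd : s.Nodup) (hall : ∀ q : Q m n, q ∈ s) :
    ∃ c : F, σ X * Fprod σ s = Fprod σ s * σ X + c • Fprod σ s := by
  refine ⟨∑ i : Fin s.length, cc X (s.get i) (s.get i), ?_⟩
  rw [even_Fprod_comm σ hbra hX s]
  congr 1
  rw [Finset.sum_smul]
  apply Finset.sum_congr rfl
  intro i _
  rw [Finset.sum_eq_single (s.get i)]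
  · have hset : s.set (i : ℕ) (s.get i) = s := by
      apply List.ext_getElem
      · simp
      · intro j h1 h2'
        by_cases hj : (i : ℕ) = j
        · subst hj
          simp [List.getElem_set_self, List.get_eq_getElem]
        · rw [List.getElem_set_ne hj]
    rw [hset]
  · intro r _ hr
    have hdup : ¬ (s.set (i : ℕ) r).Nodup := by
      obtain ⟨j, hj⟩ := List.mem_iff_get.mp (hall r)
      have hji : j ≠ i := by
        intro h; rw [h] at hj; exact hr hj.symm
      intro hnd'
      have hlen1 : (i : ℕ) < (s.set (i : ℕ) r).length := by
        rw [List.length_set]; exact i.isLt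
      have hlen2 : (j : ℕ) < (s.set (i : ℕ) r).length := by
        rw [List.length_set]; exact j.isLt
      have hv1 : (s.set (i : ℕ) r).get ⟨i, hlen1⟩ = r := List.getElem_set_self hlen1
      have hv2 : (s.set (i : ℕ) r).get ⟨j, hlen2⟩ = r := by
        rw [List.get_eq_getElem, List.getElem_set_ne (fun h => hji (Fin.ext h.symm)) hlen2]
        exact hj
      have := (List.nodup_iff_injective_get.mp hnd') (hv1.trans hv2.symm)
      apply hji
      apply Fin.ext
      have := congrArg Fin.val this
      simpa using this.symm
    rw [Fprod_dup σ hbra h2 hdup, smul_zero]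
  · intro h; exact absurd (Finset.mem_univ _) h

end bra

end GBV3

namespace GBV4
open GBV GBV2 GBV3

variable {F : Type} [Field F] {m n : ℕ}

/-- weight function for the conjugation torus -/
def wt (m : ℕ) (t : F) (k : Fin (m + n)) : F := if (k : ℕ) < m then t else 1

lemma wt_ne_zero {t : F} (ht : t ≠ 0) (k : Fin (m + n)) : wt m t k ≠ 0 := by
  rw [wt]; split
  · exact ht
  · exact one_ne_zero

/-- conjugation by `diag(t·1_m, 1_n)` as a linear map on matrices -/
def theta (m n : ℕ) (t : F) :
    Matrix (Fin (m + n)) (Fin (m + n)) F →ₗ[F] Matrix (Fin (m + n)) (Fin (m + n)) F where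
  toFun X := Matrix.of fun k l => wt m t k * X k l * (wt m t l)⁻¹
  map_add' X Y := by ext k l; simp [Matrix.add_apply]; ring
  map_smul' c X := by ext k l; simp [Matrix.smul_apply]; ring

lemma theta_apply (t : F) (X : Matrix (Fin (m + n)) (Fin (m + n)) F) (k l : Fin (m + n)) :
    theta m n t X k l = wt m t k * X k l * (wt m t l)⁻¹ := rfl

lemma theta_mul {t : F} (ht : t ≠ 0) (X Y : Matrix (Fin (m + n)) (Fin (m + n)) F) :
    theta m n t (X * Y) = theta m n t X * theta m n t Y := by
  ext k l
  rw [theta_apply, Matrix.mul_apply, Matrix.mul_apply, Finset.mul_sum, Finset.sum_mul]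
  apply Finset.sum_congr rfl
  intro x _
  rw [theta_apply, theta_apply]
  field_simp [wt_ne_zero ht]

lemma theta_one {t : F} (ht : t ≠ 0) : theta m n t (1 : Matrix (Fin (m + n)) (Fin (m + n)) F) = 1 := by
  ext k l
  rw [theta_apply, Matrix.one_apply]
  by_cases h : k = l
  · subst h; simp [mul_inv_cancel₀ (wt_ne_zero ht k)]
  · simp [h, Matrix.one_apply_ne h]

lemma theta_pow {t : F} (ht : t ≠ 0) (X : Matrix (Fin (m + n)) (Fin (m + n)) F) (e : ℕ) :
    theta m n t (X ^ e) = (theta m n t X) ^ e := by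
  induction e with
  | zero => rw [pow_zero, pow_zero, theta_one ht]
  | succ e ih => rw [pow_succ, pow_succ, theta_mul ht, ih]

lemma theta_glOdd (t : F) (X : Matrix (Fin (m + n)) (Fin (m + n)) F) :
    theta m n t (glOdd F m n X) = glOdd F m n (theta m n t X) := by
  ext k l
  simp only [glOdd, theta_apply, Matrix.of_apply]
  split
  · rfl
  · simp

lemma theta_mem {t : F} {i : ZMod 2} {X : Matrix (Fin (m + n)) (Fin (m + n)) F}
    (hX : X ∈ glGr F m n i) : theta m n t X ∈ glGr F m n i := by
  intro k l h
  rw [theta_apply, hX k l h]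
  simp

lemma theta_even_fix {t : F} (ht : t ≠ 0) {X : Matrix (Fin (m + n)) (Fin (m + n)) F}
    (hX : X ∈ glGr F m n 0) : theta m n t X = X := by
  ext k l
  rw [theta_apply]
  by_cases hk : (k : ℕ) < m <;> by_cases hl : (l : ℕ) < m
  · rw [wt, wt, if_pos hk, if_pos hl]
    field_simp
  · rw [hX k l (by simp only [glPar, if_pos hk, if_neg hl]; decide), mul_zero, zero_mul]
  · rw [hX k l (by simp only [glPar, if_neg hk, if_pos hl]; decide), mul_zero, zero_mul]
  · rw [wt, wt, if_neg hk, if_neg hl]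
    simp

lemma theta_bra {t : F} (ht : t ≠ 0) (X Y : Matrix (Fin (m + n)) (Fin (m + n)) F) :
    glBra F m n (theta m n t X) (theta m n t Y) = theta m n t (glBra F m n X Y) := by
  rw [glBra, glBra, map_add, map_sub, theta_mul ht, theta_mul ht, map_nsmul,
    theta_mul ht, theta_glOdd, theta_glOdd]

lemma theta_Fmat {t : F} (ht : t ≠ 0) (q : Q m n) :
    theta m n t (Fmat F m n q) = t⁻¹ • Fmat F m n q := by
  ext k l
  show wt m t k * Fmat F m n q k l * (wt m t l)⁻¹ = (t⁻¹ • Fmat F m n q) k l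
  rw [Matrix.smul_apply, Fmat, glE_apply]
  split
  · next heq =>
    rw [← heq.1, ← heq.2, wt, wt]
    rw [if_neg (by simp [Fin.coe_natAdd]), if_pos (by simp [Fin.coe_castAdd, q.1.isLt])]
    simp [mul_comm]
  · simp

lemma theta_Emat {t : F} (ht : t ≠ 0) (q : Q m n) :
    theta m n t (Emat F m n q) = t • Emat F m n q := by
  ext k l
  show wt m t k * Emat F m n q k l * (wt m t l)⁻¹ = (t • Emat F m n q) k l
  rw [Matrix.smul_apply, Emat, glE_apply]
  split
  · next heq =>
    rw [← heq.1, ← heq.2, wt, wt]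
    rw [if_pos (by simp [Fin.coe_castAdd, q.1.isLt]), if_neg (by simp [Fin.coe_natAdd])]
    simp
  · simp

end GBV4


open GBV GBV2 GBV3 GBV4 in
/-- for g = gl(m|n) and a simple u(g₀,χ)-module M (with χ(N₀⁺)=0) with
maximal vector v of weight λ, if the scalar f₁(λ) by which e₁⋯e_l f₁⋯f_l acts on v is
nonzero, then the graded baby Verma module Z^χ(M) = u(g,χ) ⊗_{u(g₀⊕g₁,χ)} M is
simple. -/
theorem graded_babyVerma_simple_of_scalar_ne_zero
    {F : Type} [Field F] [IsAlgClosed F] (p : ℕ) [Fact p.Prime] (hp : 3 < p) [CharP F p]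
    (m n : ℕ)
    -- χ ∈ g₀*, vanishing on the odd part and on N₀⁺
    (χ : Matrix (Fin (m + n)) (Fin (m + n)) F →ₗ[F] F)
    (hχodd : ∀ X ∈ glGr F m n 1, χ X = 0)
    (hχN : ∀ k l : Fin (m + n), k < l → glPar m n k = glPar m n l → χ (glE F m n k l) = 0)
    -- M: a simple u(g₀,χ)-module, extended to P = g₀ ⊕ g₁ with g₁·M = 0;
    -- ρ records the action (only its restriction to g₀ ⊕ g₁ is constrained)
    {M : Type} [AddCommGroup M] [Module F M]
    (ρ : Matrix (Fin (m + n)) (Fin (m + n)) F →ₗ[F] Module.End F M)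
    (hρbra : ∀ X ∈ glGr F m n 0, ∀ Y ∈ glGr F m n 0,
      ρ (glBra F m n X Y) = ρ X * ρ Y - ρ Y * ρ X)
    (hρchar : ∀ X ∈ glGr F m n 0,
      (ρ X) ^ p - ρ (X ^ p) = (χ X) ^ p • (1 : Module.End F M))
    (hρg1 : ∀ (i : Fin m) (j : Fin n), ρ (glE F m n (i.castAdd n) (Fin.natAdd m j)) = 0)
    (hMne : (⊤ : Submodule F M) ≠ ⊥)
    (hMsimple : ∀ N : Submodule F M, (∀ X ∈ glGr F m n 0, ∀ w ∈ N, ρ X w ∈ N) →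
      N = ⊥ ∨ N = ⊤)
    -- a maximal vector v ∈ M of weight λ
    (v : M) (hvne : v ≠ 0) (lam : Fin (m + n) → F)
    (hvh : ∀ k : Fin (m + n), ρ (glE F m n k k) v = lam k • v)
    (hvN : ∀ k l : Fin (m + n), k < l → glPar m n k = glPar m n l → ρ (glE F m n k l) v = 0)
    -- Z = Z^χ(M): the induced module u(g,χ) ⊗_{u(g₀⊕g₁,χ)} M, with structure map j,
    -- characterized by the universal property of induction
    {Z : Type} [AddCommGroup Z] [Module F Z]
    (σ : Matrix (Fin (m + n)) (Fin (m + n)) F →ₗ[F] Module.End F Z)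
    (hσbra : ∀ i j : ZMod 2, ∀ X ∈ glGr F m n i, ∀ Y ∈ glGr F m n j,
      σ (glBra F m n X Y) = σ X * σ Y - ((-1 : F) ^ (i.val * j.val)) • (σ Y * σ X))
    (hσchar : ∀ X ∈ glGr F m n 0,
      (σ X) ^ p - σ (X ^ p) = (χ X) ^ p • (1 : Module.End F Z))
    (Zgr : ZMod 2 → Submodule F Z) (hZg : DirectSum.IsInternal Zgr)
    (hσgr : ∀ i j : ZMod 2, ∀ X ∈ glGr F m n i, ∀ z ∈ Zgr j, σ X z ∈ Zgr (i + j))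
    (j : M →ₗ[F] Z) (hjinj : Function.Injective j) (hj0 : ∀ w : M, j w ∈ Zgr 0)
    (hjequiv : ∀ X ∈ glGr F m n 0, ∀ w : M, j (ρ X w) = σ X (j w))
    (hjg1 : ∀ (a : Fin m) (b : Fin n) (w : M),
      σ (glE F m n (a.castAdd n) (Fin.natAdd m b)) (j w) = 0)
    (huniv : ∀ (W : Type) [AddCommGroup W] [Module F W]
      (τ : Matrix (Fin (m + n)) (Fin (m + n)) F →ₗ[F] Module.End F W),
      (∀ i j' : ZMod 2, ∀ X ∈ glGr F m n i, ∀ Y ∈ glGr F m n j',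
        τ (glBra F m n X Y) = τ X * τ Y - ((-1 : F) ^ (i.val * j'.val)) • (τ Y * τ X)) →
      (∀ X ∈ glGr F m n 0,
        (τ X) ^ p - τ (X ^ p) = (χ X) ^ p • (1 : Module.End F W)) →
      ∀ φ : M →ₗ[F] W,
        (∀ X ∈ glGr F m n 0, ∀ w : M, φ (ρ X w) = τ X (φ w)) →
        (∀ (a : Fin m) (b : Fin n) (w : M),
          τ (glE F m n (a.castAdd n) (Fin.natAdd m b)) (φ w) = 0) →
        ∃! Φ : Z →ₗ[F] W, (∀ X z, Φ (σ X z) = τ X (Φ z)) ∧ Φ ∘ₗ j = φ)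
    -- the bases of g₁ and g₋₁ listed in ascending height order
    (L : List (Fin m × Fin n)) (hLnd : L.Nodup) (hLall : ∀ q : Fin m × Fin n, q ∈ L)
    (hLsort : L.Pairwise fun a b =>
      (m + (a.2 : ℕ)) - (a.1 : ℕ) ≤ (m + (b.2 : ℕ)) - (b.1 : ℕ))
    -- the scalar f₁(λ) by which e₁⋯e_l f₁⋯f_l acts on v
    (f1 : F)
    (hf1 : ((L.map fun q => σ (glE F m n (q.1.castAdd n) (Fin.natAdd m q.2))).prod *
        (L.map fun q => σ (glE F m n (Fin.natAdd m q.2) (q.1.castAdd n))).prod) (j v) =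
      f1 • (j v))
    (hf1ne : f1 ≠ 0) :
    -- then Z^χ(M) is simple (as a Z/2-graded u(g,χ)-module)
    ∀ N : Submodule F Z,
      (∀ X : Matrix (Fin (m + n)) (Fin (m + n)) F, ∀ z ∈ N, σ X z ∈ N) →
      N = (N ⊓ Zgr 0) ⊔ (N ⊓ Zgr 1) → N = ⊥ ∨ N = ⊤ := by
  classical
  intro N hNinv _hNgr
  by_cases hNbot : N = ⊥
  · exact Or.inl hNbot
  right
  -- characteristic is odd
  have h2F : (2 : F) ≠ 0 := by
    have := (CharP.cast_eq_zero_iff F p 2)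
    intro h
    have h2 : ((2 : ℕ) : F) = 0 := by exact_mod_cast h
    have hdvd := this.mp h2
    have := Nat.le_of_dvd (by norm_num) hdvd
    omega
  -- the cardinality of the set of odd roots
  have hcard : Fintype.card (Q m n) = L.length := by
    have h1 : L.toFinset = Finset.univ := Finset.eq_univ_iff_forall.mpr
      (fun q => List.mem_toFinset.mpr (hLall q))
    have h2 : L.toFinset.card = L.length := List.toFinset_card_of_nodup hLnd
    rw [← h2, h1, Finset.card_univ]
  -- generators and their span
  set gen : Set Z := {z | ∃ s : List (Q m n), ∃ w : M, Fprod σ s (j w) = z} with hgen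
  set N' : Submodule F Z := Submodule.span F gen with hN'
  have hgensub : gen ⊆ (N' : Set Z) := Submodule.subset_span
  have hmapN' : ∀ (f : Module.End F Z), (∀ g ∈ gen, f g ∈ N') → ∀ z ∈ N', f z ∈ N' := by
    intro f hf z hz
    have hle : N'.map f ≤ N' := by
      rw [hN', Submodule.map_span, Submodule.span_le]
      rintro y ⟨g, hg, rfl⟩
      exact hf g hg
    exact hle (Submodule.mem_map_of_mem hz)
  have hfopN' : ∀ q : Q m n, ∀ z ∈ N', fop σ q z ∈ N' := by
    intro q z hz
    refine hmapN' (fop σ q) ?_ z hz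
    rintro g ⟨s, w, rfl⟩
    exact hgensub ⟨q :: s, w, by rw [Fprod_cons]; rfl⟩
  have hevenN' : ∀ X ∈ glGr F m n 0, ∀ z ∈ N', σ X z ∈ N' := by
    intro X hX z hz
    refine hmapN' (σ X) ?_ z hz
    rintro g ⟨s, w, rfl⟩
    have hcomm := congrArg (fun f : Module.End F Z => f (j w)) (even_Fprod_comm σ hσbra hX s)
    simp only [Module.End.mul_apply, LinearMap.add_apply, LinearMap.sum_apply,
      LinearMap.smul_apply] at hcomm
    rw [hcomm, ← hjequiv X hX w]
    apply Submodule.add_mem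
    · exact hgensub ⟨s, ρ X w, rfl⟩
    · apply Submodule.sum_mem
      intro i _
      apply Submodule.sum_mem
      intro r _
      exact Submodule.smul_mem _ _ (hgensub ⟨s.set i r, w, rfl⟩)
  have heopgen : ∀ (q : Q m n) (s : List (Q m n)) (w : M), eop σ q (Fprod σ s (j w)) ∈ N' := by
    intro q s w
    induction s with
    | nil =>
      have : eop σ q (Fprod σ [] (j w)) = 0 := by
        rw [Fprod_nil]
        show σ (Emat F m n q) ((1 : Module.End F Z) (j w)) = 0
        rw [Module.End.one_apply]
        exact hjg1 q.1 q.2 w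
      rw [this]; exact Submodule.zero_mem _
    | cons r u ih =>
      rw [Fprod_cons, Module.End.mul_apply]
      have hco := congrArg (fun f : Module.End F Z => f (Fprod σ u (j w)))
        (eop_fop_rel σ hσbra q r)
      simp only [Module.End.mul_apply, LinearMap.sub_apply] at hco
      rw [hco]
      apply Submodule.sub_mem
      · exact hevenN' _ (braEF_mem q r) _ (hgensub ⟨u, w, rfl⟩)
      · exact hfopN' r _ ih
  have heopN' : ∀ q : Q m n, ∀ z ∈ N', eop σ q z ∈ N' := by
    intro q z hz
    refine hmapN' (eop σ q) ?_ z hz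
    rintro g ⟨s, w, rfl⟩
    exact heopgen q s w
  have hallN' : ∀ X, ∀ z ∈ N', σ X z ∈ N' := by
    intro X z hz
    obtain ⟨X0, hX0, cL, cU, hXeq⟩ := matrix_decomp X
    rw [hXeq, map_add, map_add, LinearMap.add_apply, LinearMap.add_apply]
    apply Submodule.add_mem
    apply Submodule.add_mem
    · exact hevenN' X0 hX0 z hz
    · rw [map_sum, LinearMap.sum_apply]
      apply Submodule.sum_mem
      intro q _
      rw [map_smul, LinearMap.smul_apply]
      exact Submodule.smul_mem _ _ (hfopN' q z hz)
    · rw [map_sum, LinearMap.sum_apply]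
      apply Submodule.sum_mem
      intro q _
      rw [map_smul, LinearMap.smul_apply]
      exact Submodule.smul_mem _ _ (heopN' q z hz)
  have hjgen : ∀ w : M, j w ∈ N' := fun w => hgensub ⟨[], w, by rw [Fprod_nil]; rfl⟩
  -- the span of the monomials is everything
  have hN'top : N' = ⊤ := by
    have hinv : ∀ X, N' ≤ N'.comap (σ X) := fun X z hz => hallN' X z hz
    let τ : Matrix (Fin (m + n)) (Fin (m + n)) F →ₗ[F] Module.End F (Z ⧸ N') :=
      { toFun := fun X => Submodule.mapQ N' N' (σ X) (hinv X)
        map_add' := by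
          intro X Y
          apply LinearMap.ext
          intro zq
          obtain ⟨z, rfl⟩ := Submodule.Quotient.mk_surjective N' zq
          rw [Submodule.mapQ_apply, LinearMap.add_apply, Submodule.mapQ_apply,
            Submodule.mapQ_apply, map_add, LinearMap.add_apply]
          rfl
        map_smul' := by
          intro c X
          apply LinearMap.ext
          intro zq
          obtain ⟨z, rfl⟩ := Submodule.Quotient.mk_surjective N' zq
          rw [Submodule.mapQ_apply, RingHom.id_apply, LinearMap.smul_apply,
            Submodule.mapQ_apply, map_smul, LinearMap.smul_apply]
          rfl }
    have hτapp : ∀ X z, τ X (Submodule.Quotient.mk z)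
        = Submodule.Quotient.mk (σ X z) := fun X z => Submodule.mapQ_apply N' N' (σ X) (h := hinv X) z
    have hmk : ∀ z : Z, (Submodule.Quotient.mk z : Z ⧸ N') = N'.mkQ z := fun _ => rfl
    have hτpow : ∀ X (k : ℕ) z, ((τ X) ^ k) (Submodule.Quotient.mk z)
        = Submodule.Quotient.mk (((σ X) ^ k) z) := by
      intro X k
      induction k with
      | zero => intro z; rw [pow_zero, pow_zero, Module.End.one_apply, Module.End.one_apply]
      | succ k ih =>
        intro z
        rw [pow_succ, pow_succ, Module.End.mul_apply, Module.End.mul_apply, hτapp, ih]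
    have hτbra : ∀ i j' : ZMod 2, ∀ X ∈ glGr F m n i, ∀ Y ∈ glGr F m n j',
        τ (glBra F m n X Y) = τ X * τ Y - ((-1 : F) ^ (i.val * j'.val)) • (τ Y * τ X) := by
      intro i j' X hX Y hY
      apply LinearMap.ext
      intro zq
      obtain ⟨z, rfl⟩ := Submodule.Quotient.mk_surjective N' zq
      have hb := congrArg (fun f : Module.End F Z => f z) (hσbra i j' X hX Y hY)
      simp only [Module.End.mul_apply, LinearMap.sub_apply, LinearMap.smul_apply] at hb
      rw [hτapp, LinearMap.sub_apply, LinearMap.smul_apply, Module.End.mul_apply,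
        Module.End.mul_apply, hτapp, hτapp, hτapp, hτapp, hb, hmk, hmk, hmk, map_sub,
        map_smul]
    have hτchar : ∀ X ∈ glGr F m n 0,
        (τ X) ^ p - τ (X ^ p) = (χ X) ^ p • (1 : Module.End F (Z ⧸ N')) := by
      intro X hX
      apply LinearMap.ext
      intro zq
      obtain ⟨z, rfl⟩ := Submodule.Quotient.mk_surjective N' zq
      have hb := congrArg (fun f : Module.End F Z => f z) (hσchar X hX)
      simp only [LinearMap.sub_apply, LinearMap.smul_apply, Module.End.one_apply] at hb
      rw [LinearMap.sub_apply, LinearMap.smul_apply, Module.End.one_apply, hτpow, hτapp,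
        hmk, hmk, ← map_sub, hb, map_smul]
      rfl
    obtain ⟨Φ, _, huniq⟩ := huniv (Z ⧸ N') τ hτbra hτchar 0
      (by intro X hX w; simp) (by intro a b w; simp)
    have h1 : N'.mkQ = Φ := by
      apply huniq
      constructor
      · intro X z
        rw [← hmk, ← hmk, hτapp]
      · apply LinearMap.ext
        intro w
        rw [LinearMap.comp_apply, LinearMap.zero_apply, Submodule.mkQ_apply,
          Submodule.Quotient.mk_eq_zero]
        exact hjgen w
    have h0 : (0 : Z →ₗ[F] Z ⧸ N') = Φ := by
      apply huniq
      constructor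
      · intro X z; simp
      · apply LinearMap.ext; intro w; simp
    have hmk0 : N'.mkQ = (0 : Z →ₗ[F] Z ⧸ N') := h1.trans h0.symm
    rw [eq_top_iff]
    intro z _
    have := congrArg (fun f : Z →ₗ[F] Z ⧸ N' => f z) hmk0
    simp only [Submodule.mkQ_apply, LinearMap.zero_apply] at this
    exact (Submodule.Quotient.mk_eq_zero N').mp this
  -- commutation of even elements with the full product
  have hFLcomm : ∀ X ∈ glGr F m n 0, ∃ c : F, ∀ w : M,
      σ X (Fprod σ L (j w)) = Fprod σ L (j (ρ X w)) + c • Fprod σ L (j w) := by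
    intro X hX
    obtain ⟨c, hcomm⟩ := full_comm σ hσbra h2F hX hLnd hLall
    refine ⟨c, fun w => ?_⟩
    have h := congrArg (fun f : Module.End F Z => f (j w)) hcomm
    simp only [Module.End.mul_apply, LinearMap.add_apply, LinearMap.smul_apply] at h
    rw [h, ← hjequiv X hX w]
  -- reading off hf1
  have hf1' : ((L.map (eop σ)).prod) (Fprod σ L (j v)) = f1 • j v := by
    rw [← Module.End.mul_apply]
    exact hf1
  -- injectivity of the top monomial map
  have hK4 : ∀ u : M, Fprod σ L (j u) = 0 → u = 0 := by
    have hKinv : ∀ X ∈ glGr F m n 0, ∀ w ∈ LinearMap.ker ((Fprod σ L) ∘ₗ j),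
        ρ X w ∈ LinearMap.ker ((Fprod σ L) ∘ₗ j) := by
      intro X hX w hw
      rw [LinearMap.mem_ker, LinearMap.comp_apply] at hw ⊢
      obtain ⟨c, hc⟩ := hFLcomm X hX
      have := hc w
      rw [hw, smul_zero, add_zero] at this
      rw [← this]
      exact map_zero _
    rcases hMsimple _ hKinv with hbot | htop
    · intro u hu
      have : u ∈ LinearMap.ker ((Fprod σ L) ∘ₗ j) := by
        rw [LinearMap.mem_ker, LinearMap.comp_apply]; exact hu
      rw [hbot] at this
      exact (Submodule.mem_bot F).mp this
    · exfalso
      have hv : Fprod σ L (j v) = 0 := by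
        have : v ∈ LinearMap.ker ((Fprod σ L) ∘ₗ j) := htop ▸ Submodule.mem_top
        rw [LinearMap.mem_ker, LinearMap.comp_apply] at this
        exact this
      rw [hv, map_zero] at hf1'
      have : j v = 0 := by
        have := hf1'.symm
        rcases smul_eq_zero.mp this with h | h
        · exact absurd h hf1ne
        · exact h
      exact hvne (hjinj (by rw [this, map_zero]))
  -- degree submodules
  set ZkS : ℕ → Submodule F Z := fun k =>
    Submodule.span F {z | ∃ s : List (Q m n), ∃ w : M, s.length = k ∧ Fprod σ s (j w) = z}
    with hZkS
  -- decomposition into degree components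
  have hdecomp : ∀ z : Z, ∃ y : Fin (L.length + 1) → Z,
      (∀ k : Fin (L.length + 1), y k ∈ ZkS (k : ℕ)) ∧ z = ∑ k, y k := by
    have hSum : ∃ SumZ : Submodule F Z, ∀ z : Z, z ∈ SumZ ↔
        ∃ y : Fin (L.length + 1) → Z,
        (∀ k : Fin (L.length + 1), y k ∈ ZkS (k : ℕ)) ∧ z = ∑ k, y k := by
      refine ⟨{
        carrier := {z | ∃ y : Fin (L.length + 1) → Z,
          (∀ k : Fin (L.length + 1), y k ∈ ZkS (k : ℕ)) ∧ z = ∑ k, y k}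
        add_mem' := ?_
        zero_mem' := ⟨0, fun k => Submodule.zero_mem _, by simp⟩
        smul_mem' := ?_ }, fun z => Iff.rfl⟩
      · rintro a b ⟨y, hy, rfl⟩ ⟨y', hy', rfl⟩
        exact ⟨y + y', fun k => Submodule.add_mem _ (hy k) (hy' k),
          by simp [Finset.sum_add_distrib]⟩
      · rintro c a ⟨y, hy, rfl⟩
        exact ⟨c • y, fun k => Submodule.smul_mem _ _ (hy k),
          by simp [Finset.smul_sum]⟩
    obtain ⟨SumZ, hSumZ⟩ := hSum
    intro z
    rw [← hSumZ]
    have hle : N' ≤ SumZ := by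
      rw [hN', Submodule.span_le]
      rintro g ⟨s, w, rfl⟩
      rw [SetLike.mem_coe, hSumZ]
      by_cases hs : s.length < L.length + 1
      · refine ⟨fun k => if k = ⟨s.length, hs⟩ then Fprod σ s (j w) else 0, ?_, ?_⟩
        · intro k
          dsimp only
          split
          · next h =>
            subst h
            exact Submodule.subset_span ⟨s, w, rfl, rfl⟩
          · exact Submodule.zero_mem _
        · symm
          rw [Finset.sum_eq_single (⟨s.length, hs⟩ : Fin (L.length + 1))]
          · simp
          · intro k _ hk; simp [hk]
          · intro h; exact absurd (Finset.mem_univ _) h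
      · have hnd : ¬ s.Nodup := by
          intro hnd
          have := List.Nodup.length_le_card hnd
          omega
        rw [Fprod_dup σ hσbra h2F hnd, LinearMap.zero_apply]
        exact ⟨0, fun k => Submodule.zero_mem _, by simp⟩
    have : z ∈ N' := by rw [hN'top]; trivial
    exact hle this
  -- the scaling operators
  have hPhi : ∀ t : F, t ≠ 0 → ∃ Φ : Z →ₗ[F] Z,
      (∀ k : ℕ, ∀ y ∈ ZkS k, Φ y = (t⁻¹) ^ k • y) ∧
      (∀ q z, fop σ q (Φ z) = t • Φ (fop σ q z)) := by
    intro t ht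
    let τ : Matrix (Fin (m + n)) (Fin (m + n)) F →ₗ[F] Module.End F Z :=
      σ ∘ₗ theta m n t
    have hτdef : ∀ X, τ X = σ (theta m n t X) := fun X => rfl
    have hτbra : ∀ i j' : ZMod 2, ∀ X ∈ glGr F m n i, ∀ Y ∈ glGr F m n j',
        τ (glBra F m n X Y) = τ X * τ Y - ((-1 : F) ^ (i.val * j'.val)) • (τ Y * τ X) := by
      intro i j' X hX Y hY
      rw [hτdef, hτdef, hτdef, ← theta_bra ht]
      exact hσbra i j' _ (theta_mem hX) _ (theta_mem hY)
    have hτchar : ∀ X ∈ glGr F m n 0,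
        (τ X) ^ p - τ (X ^ p) = (χ X) ^ p • (1 : Module.End F Z) := by
      intro X hX
      rw [hτdef, hτdef, theta_pow ht, theta_even_fix ht hX]
      exact hσchar X hX
    have hτj : ∀ X ∈ glGr F m n 0, ∀ w : M, j (ρ X w) = τ X (j w) := by
      intro X hX w
      rw [hτdef, theta_even_fix ht hX]
      exact hjequiv X hX w
    have hτe : ∀ (a : Fin m) (b : Fin n) (w : M),
        τ (glE F m n (a.castAdd n) (Fin.natAdd m b)) (j w) = 0 := by
      intro a b w
      rw [hτdef]
      have : theta m n t (glE F m n (a.castAdd n) (Fin.natAdd m b)) =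
          t • glE F m n (a.castAdd n) (Fin.natAdd m b) := theta_Emat ht (a, b)
      rw [this, map_smul, LinearMap.smul_apply, hjg1 a b w, smul_zero]
    obtain ⟨Φ, ⟨hΦ1, hΦ2⟩, _⟩ := huniv Z τ hτbra hτchar j hτj hτe
    have hj' : ∀ w, Φ (j w) = j w := fun w => congrArg (fun f : M →ₗ[F] Z => f w) hΦ2
    have hfopΦ : ∀ q z, Φ (fop σ q z) = t⁻¹ • fop σ q (Φ z) := by
      intro q z
      rw [fop, hΦ1, hτdef, theta_Fmat ht, map_smul, LinearMap.smul_apply]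
    have hmono : ∀ (s : List (Q m n)) (w : M),
        Φ (Fprod σ s (j w)) = (t⁻¹) ^ s.length • Fprod σ s (j w) := by
      intro s w
      induction s with
      | nil =>
        rw [Fprod_nil, Module.End.one_apply, hj', List.length_nil, pow_zero, one_smul]
      | cons q u ih =>
        rw [Fprod_cons, Module.End.mul_apply, hfopΦ, ih, List.length_cons, map_smul,
          pow_succ, mul_smul]
        rw [smul_comm]
    refine ⟨Φ, ?_, ?_⟩
    · intro k y hy
      have hker : ZkS k ≤ LinearMap.ker (Φ - (t⁻¹) ^ k • LinearMap.id) := by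
        rw [hZkS, Submodule.span_le]
        rintro g ⟨s, w, hlen, rfl⟩
        rw [SetLike.mem_coe, LinearMap.mem_ker, LinearMap.sub_apply, LinearMap.smul_apply,
          LinearMap.id_apply, hmono, hlen, sub_self]
      have := hker hy
      rw [LinearMap.mem_ker, LinearMap.sub_apply, LinearMap.smul_apply,
        LinearMap.id_apply, sub_eq_zero] at this
      exact this
    · intro q z
      rw [hfopΦ, smul_smul, mul_inv_cancel₀ ht, one_smul]
  -- canonical representation of a degree component
  have hrep : ∀ k : ℕ, ∀ y ∈ ZkS k, ∃ w : Finset (Q m n) → M,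
      (∀ S, S.card ≠ k → w S = 0) ∧
      y = ∑ S : Finset (Q m n), Fprod σ (L.filter (· ∈ S)) (j (w S)) := by
    intro k
    have hRS : ∃ RS : Submodule F Z, ∀ y : Z, y ∈ RS ↔ ∃ w : Finset (Q m n) → M,
        (∀ S, S.card ≠ k → w S = 0) ∧
        y = ∑ S : Finset (Q m n), Fprod σ (L.filter (· ∈ S)) (j (w S)) := by
      refine ⟨{
        carrier := {y | ∃ w : Finset (Q m n) → M, (∀ S, S.card ≠ k → w S = 0) ∧
          y = ∑ S : Finset (Q m n), Fprod σ (L.filter (· ∈ S)) (j (w S))}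
        add_mem' := ?_
        zero_mem' := ⟨0, fun S _ => rfl, by simp⟩
        smul_mem' := ?_ }, fun y => Iff.rfl⟩
      · rintro a b ⟨w, hw, rfl⟩ ⟨w', hw', rfl⟩
        refine ⟨w + w', fun S hS => by simp [hw S hS, hw' S hS], ?_⟩
        rw [← Finset.sum_add_distrib]
        apply Finset.sum_congr rfl
        intro S _
        rw [Pi.add_apply, map_add, map_add]
      · rintro cc a ⟨w, hw, rfl⟩
        refine ⟨cc • w, fun S hS => by simp [hw S hS], ?_⟩
        rw [Finset.smul_sum]
        apply Finset.sum_congr rfl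
        intro S _
        rw [Pi.smul_apply, map_smul, map_smul]
    obtain ⟨RS, hRS⟩ := hRS
    intro y hy
    rw [← hRS]
    refine Submodule.span_le.mpr ?_ hy
    rintro g ⟨s, w, hlen, rfl⟩
    rw [SetLike.mem_coe, hRS]
    by_cases hnd : s.Nodup
    · have hSk : s.toFinset.card = k := by
        rw [List.toFinset_card_of_nodup hnd]; exact hlen
      have hperm : s.Perm (L.filter (· ∈ s.toFinset)) := by
        apply List.Subperm.antisymm
        · apply List.subperm_of_subset hnd
          intro q hq
          rw [List.mem_filter]
          exact ⟨hLall q, by simpa using List.mem_toFinset.mpr hq⟩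
        · apply List.subperm_of_subset (List.Nodup.filter _ hLnd)
          intro q hq
          rw [List.mem_filter] at hq
          exact List.mem_toFinset.mp (by simpa using hq.2)
      obtain ⟨cp, hcp, hFeq⟩ := Fprod_perm σ hσbra hperm
      refine ⟨fun S' => if S' = s.toFinset then cp • w else 0, ?_, ?_⟩
      · intro S' hS'
        dsimp only
        split
        · next h => subst h; exact absurd hSk hS'
        · rfl
      · rw [hFeq]
        symm
        rw [Finset.sum_eq_single s.toFinset]
        · dsimp only
          rw [if_pos rfl, map_smul, map_smul, LinearMap.smul_apply]
        · intro S' _ hS'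
          dsimp only
          rw [if_neg hS', map_zero, map_zero]
        · intro h; exact absurd (Finset.mem_univ _) h
    · refine ⟨0, fun _ _ => rfl, ?_⟩
      rw [Fprod_dup σ hσbra h2F hnd, LinearMap.zero_apply]
      symm
      apply Finset.sum_eq_zero
      intro S _
      simp
  -- a degree component killed by all fops vanishes below the top degree
  have hkill : ∀ k : ℕ, k < L.length → ∀ y ∈ ZkS k, (∀ q, fop σ q y = 0) → y = 0 := by
    intro k hk y hy hq
    obtain ⟨w, hw0, hyeq⟩ := hrep k y hy
    have hwS : ∀ S : Finset (Q m n), w S = 0 := by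
      intro S
      by_cases hSc : S.card = k
      swap
      · exact hw0 S hSc
      have hSne : (Sᶜ : Finset (Q m n)).Nonempty := by
        rw [← Finset.card_pos, Finset.card_compl, hcard, hSc]
        omega
      obtain ⟨q0, hq0⟩ := hSne
      have hq0S : q0 ∉ S := Finset.mem_compl.mp hq0
      have hq0cS : q0 ∈ L.filter (fun q => q ∉ S) := by
        rw [List.mem_filter]; exact ⟨hLall q0, by simpa using hq0S⟩
      have hcSne : L.filter (fun q => q ∉ S) ≠ [] := List.ne_nil_of_mem hq0cS
      have hFcS : Fprod σ (L.filter (fun q => q ∉ S)) y = 0 := by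
        obtain h | ⟨u, b, hub⟩ := (L.filter (fun q => q ∉ S)).eq_nil_or_concat
        · exact absurd h hcSne
        · rw [hub, List.concat_eq_append, Fprod_append, Module.End.mul_apply]
          have hb : Fprod σ [b] y = 0 := by
            rw [Fprod_cons, Fprod_nil, mul_one, hq b]
          rw [hb, map_zero]
      rw [hyeq, map_sum] at hFcS
      have hterm : ∀ S' : Finset (Q m n), S' ≠ S →
          Fprod σ (L.filter (fun q => q ∉ S)) (Fprod σ (L.filter (· ∈ S')) (j (w S'))) = 0 := by
        intro S' hS'
        by_cases hS'c : S'.card = k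
        · have hnotsub : ¬ (S' ⊆ S) := by
            intro hsub
            exact hS' (Finset.eq_of_subset_of_card_le hsub (by omega))
          obtain ⟨q1, hq1S', hq1S⟩ := Finset.not_subset.mp hnotsub
          have hdup : ¬ (L.filter (fun q => q ∉ S) ++ L.filter (· ∈ S')).Nodup := by
            intro hnd
            rw [List.nodup_append] at hnd
            exact hnd.2.2 q1
              (by rw [List.mem_filter]; exact ⟨hLall q1, by simpa using hq1S⟩) q1
              (by rw [List.mem_filter]; exact ⟨hLall q1, by simpa using hq1S'⟩) rfl
          have hzero := Fprod_dup σ hσbra h2F hdup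
          rw [← Module.End.mul_apply, ← Fprod_append, hzero, LinearMap.zero_apply]
        · rw [hw0 S' hS'c, map_zero, map_zero, map_zero]
      have hsum : ∑ S' : Finset (Q m n),
          Fprod σ (L.filter (fun q => q ∉ S)) (Fprod σ (L.filter (· ∈ S')) (j (w S')))
          = Fprod σ (L.filter (fun q => q ∉ S)) (Fprod σ (L.filter (· ∈ S)) (j (w S))) :=
        Finset.sum_eq_single S (fun S' _ hS' => hterm S' hS')
          (fun h => absurd (Finset.mem_univ _) h)
      rw [hsum] at hFcS
      have happ_nd : (L.filter (fun q => q ∉ S) ++ L.filter (· ∈ S)).Nodup := by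
        rw [List.nodup_append]
        refine ⟨List.Nodup.filter _ hLnd, List.Nodup.filter _ hLnd, ?_⟩
        rintro a ha _ ha' rfl
        rw [List.mem_filter] at ha ha'
        have h1 : a ∉ S := by simpa using ha.2
        have h2 : a ∈ S := by simpa using ha'.2
        exact h1 h2
      have hpermL : (L.filter (fun q => q ∉ S) ++ L.filter (· ∈ S)).Perm L := by
        apply List.Subperm.antisymm
        · apply List.subperm_of_subset happ_nd
          intro a ha
          rcases List.mem_append.mp ha with h | h
          · exact (List.mem_filter.mp h).1
          · exact (List.mem_filter.mp h).1
        · apply List.subperm_of_subset hLnd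
          intro a ha
          rw [List.mem_append]
          by_cases haS : a ∈ S
          · right; rw [List.mem_filter]; exact ⟨ha, by simpa using haS⟩
          · left; rw [List.mem_filter]; exact ⟨ha, by simpa using haS⟩
      obtain ⟨cp, hcp, hFeq⟩ := Fprod_perm σ hσbra hpermL
      have hc0 : cp • (Fprod σ L (j (w S))) = 0 := by
        rw [← LinearMap.smul_apply, ← hFeq, Fprod_append, Module.End.mul_apply]
        exact hFcS
      exact hK4 _ ((smul_eq_zero.mp hc0).resolve_left hcp)
    rw [hyeq]
    apply Finset.sum_eq_zero
    intro S _
    rw [hwS S, map_zero, map_zero]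
  -- top degree form
  have htopform : ∀ y ∈ ZkS L.length, ∃ w : M, y = Fprod σ L (j w) := by
    intro y hy
    obtain ⟨w, hw0, hyeq⟩ := hrep L.length y hy
    refine ⟨w Finset.univ, ?_⟩
    rw [hyeq]
    rw [Finset.sum_eq_single (Finset.univ : Finset (Q m n))]
    · have hfilt : L.filter (· ∈ (Finset.univ : Finset (Q m n))) = L :=
        List.filter_eq_self.mpr (fun a _ => by simp)
      rw [hfilt]
    · intro S _ hS
      have hScard : S.card ≠ L.length := by
        intro h
        exact hS ((Finset.card_eq_iff_eq_univ S).mp (by rw [h, ← hcard]))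
      rw [hw0 S hScard, map_zero, map_zero]
    · intro h; exact absurd (Finset.mem_univ _) h
  -- descent to a vector killed by all fops
  have hdescent : ∀ k : ℕ, ∀ z : Z, z ∈ N → z ≠ 0 →
      (∀ s : List (Q m n), s.length = k → Fprod σ s z = 0) →
      ∃ z', z' ∈ N ∧ z' ≠ 0 ∧ ∀ q, fop σ q z' = 0 := by
    intro k
    induction k with
    | zero =>
      intro z hzN hzne h0
      exact absurd ((Module.End.one_apply z).symm.trans (by rw [← Fprod_nil σ]; exact h0 [] rfl)) hzne
    | succ k ih =>
      intro z hzN hzne hall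
      by_cases hc : ∀ q, fop σ q z = 0
      · exact ⟨z, hzN, hzne, hc⟩
      · push_neg at hc
        obtain ⟨q, hq⟩ := hc
        refine ih (fop σ q z) (hNinv _ z hzN) hq ?_
        intro s hs
        have : Fprod σ (s ++ [q]) z = Fprod σ s (fop σ q z) := by
          rw [Fprod_append]
          show Fprod σ s (Fprod σ [q] z) = _
          rw [Fprod_cons, Fprod_nil, mul_one]
        rw [← this]
        exact hall (s ++ [q]) (by simp [hs])
  -- ===== main line =====
  obtain ⟨z, hzN, hzne⟩ := Submodule.exists_mem_ne_zero_of_ne_bot hNbot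
  obtain ⟨z', hz'N, hz'ne, hz'f⟩ := hdescent (L.length + 1) z hzN hzne (by
    intro s hs
    have : ¬ s.Nodup := by
      intro hnd
      have := List.Nodup.length_le_card hnd
      omega
    rw [Fprod_dup σ hσbra h2F this]
    rfl)
  -- choose distinct nonzero scalars
  have hc : ∃ c : Fin (L.length + 1) → F, Function.Injective c ∧ ∀ i, c i ≠ 0 := by
    obtain ⟨s, hs⟩ := Infinite.exists_subset_card_eq F (L.length + 2)
    have hcard' : L.length + 1 ≤ (s.erase 0).card := by
      have := Finset.pred_card_le_card_erase (s := s) (a := 0)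
      omega
    obtain ⟨u, hus, huc⟩ := Finset.exists_subset_card_eq hcard'
    refine ⟨fun i => (u.equivFin.symm (Fin.cast huc.symm i) : F), ?_, ?_⟩
    · intro a b hab
      have h1 := u.equivFin.symm.injective (Subtype.ext hab)
      have h2 := congrArg Fin.val h1
      exact Fin.ext (by simpa using h2)
    · intro i
      have hmem := (u.equivFin.symm (Fin.cast huc.symm i)).2
      exact Finset.ne_of_mem_erase (hus hmem)
  obtain ⟨c, hcinj, hcne⟩ := hc
  obtain ⟨y, hyk, hysum⟩ := hdecomp z'
  have hfopy : ∀ (q : Q m n) (k : Fin (L.length + 1)), fop σ q (y k) = 0 := by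
    intro q k
    have hrel : ∀ i : Fin (L.length + 1),
        ∑ k' : Fin (L.length + 1), (Matrix.vandermonde c) i k' • fop σ q (y k') = 0 := by
      intro i
      obtain ⟨Φ, hΦ1, hΦ2⟩ := hPhi (c i)⁻¹ (inv_ne_zero (hcne i))
      have hΦz : Φ z' = ∑ k' : Fin (L.length + 1), (c i) ^ (k' : ℕ) • y k' := by
        rw [hysum, map_sum]
        apply Finset.sum_congr rfl
        intro k' _
        rw [hΦ1 (k' : ℕ) (y k') (hyk k'), inv_inv]
      have h0 : fop σ q (Φ z') = 0 := by
        rw [hΦ2, hz'f q, map_zero, smul_zero]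
      rw [hΦz, map_sum] at h0
      calc ∑ k' : Fin (L.length + 1), (Matrix.vandermonde c) i k' • fop σ q (y k')
          = ∑ k' : Fin (L.length + 1), fop σ q ((c i) ^ (k' : ℕ) • y k') := by
            apply Finset.sum_congr rfl
            intro k' _
            rw [map_smul, Matrix.vandermonde_apply]
        _ = 0 := h0
    have hdet : IsUnit (Matrix.vandermonde c).det := by
      rw [Matrix.det_vandermonde]
      apply isUnit_iff_ne_zero.mpr
      apply Finset.prod_ne_zero_iff.mpr
      intro i _
      apply Finset.prod_ne_zero_iff.mpr
      intro j' hj'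
      have hij : i ≠ j' := by
        intro h; subst h; simp [Finset.mem_Ioi] at hj'
      exact sub_ne_zero.mpr (fun hh => hij (hcinj hh.symm))
    have hBV := Matrix.nonsing_inv_mul (Matrix.vandermonde c) hdet
    calc fop σ q (y k)
        = ∑ k' : Fin (L.length + 1),
            (1 : Matrix (Fin (L.length + 1)) (Fin (L.length + 1)) F) k k' • fop σ q (y k') := by
          rw [Finset.sum_eq_single k]
          · rw [Matrix.one_apply_eq, one_smul]
          · intro k' _ hk'
            rw [Matrix.one_apply_ne' hk', zero_smul]
          · intro h; exact absurd (Finset.mem_univ _) h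
      _ = ∑ k' : Fin (L.length + 1),
            (((Matrix.vandermonde c)⁻¹ * Matrix.vandermonde c) k k') • fop σ q (y k') := by
          rw [hBV]
      _ = ∑ k' : Fin (L.length + 1),
            (∑ i, (Matrix.vandermonde c)⁻¹ k i * Matrix.vandermonde c i k') • fop σ q (y k') := by
          apply Finset.sum_congr rfl
          intro k' _
          rw [Matrix.mul_apply]
      _ = ∑ k' : Fin (L.length + 1), ∑ i,
            (Matrix.vandermonde c)⁻¹ k i • ((Matrix.vandermonde c) i k' • fop σ q (y k')) := by
          apply Finset.sum_congr rfl
          intro k' _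
          rw [Finset.sum_smul]
          apply Finset.sum_congr rfl
          intro i _
          rw [mul_smul]
      _ = ∑ i, (Matrix.vandermonde c)⁻¹ k i •
            (∑ k' : Fin (L.length + 1), (Matrix.vandermonde c) i k' • fop σ q (y k')) := by
          rw [Finset.sum_comm]
          apply Finset.sum_congr rfl
          intro i _
          rw [Finset.smul_sum]
      _ = 0 := by
          apply Finset.sum_eq_zero
          intro i _
          rw [hrel i, smul_zero]
  have hylow : ∀ k : Fin (L.length + 1), (k : ℕ) < L.length → y k = 0 := by
    intro k hk
    exact hkill (k : ℕ) hk (y k) (hyk k) (fun q => hfopy q k)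
  have hz'top : z' = y (Fin.last L.length) := by
    rw [hysum, Finset.sum_eq_single (Fin.last L.length)]
    · intro k _ hk
      apply hylow
      have h1 := Fin.val_lt_last hk
      simpa using h1
    · intro h; exact absurd (Finset.mem_univ _) h
  obtain ⟨wbar, hwbar⟩ := htopform (y (Fin.last L.length)) (by
    have := hyk (Fin.last L.length)
    simpa using this)
  have hwbarne : wbar ≠ 0 := by
    intro h
    apply hz'ne
    rw [hz'top, hwbar, h, map_zero, map_zero]
  have hFLwN : Fprod σ L (j wbar) ∈ N := by
    rw [← hwbar, ← hz'top]; exact hz'N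
  have hMLinv : ∀ X ∈ glGr F m n 0, ∀ w ∈ Submodule.comap ((Fprod σ L) ∘ₗ j) N,
      ρ X w ∈ Submodule.comap ((Fprod σ L) ∘ₗ j) N := by
    intro X hX w hw
    rw [Submodule.mem_comap, LinearMap.comp_apply] at hw ⊢
    obtain ⟨cX, hcX⟩ := hFLcomm X hX
    have h2 : Fprod σ L (j (ρ X w)) = σ X (Fprod σ L (j w)) - cX • Fprod σ L (j w) := by
      rw [hcX w]; abel
    rw [h2]
    exact Submodule.sub_mem _ (hNinv X _ hw) (Submodule.smul_mem _ _ hw)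
  rcases hMsimple _ hMLinv with hbot | htop
  · exfalso
    have hmem : wbar ∈ Submodule.comap ((Fprod σ L) ∘ₗ j) N := by
      rw [Submodule.mem_comap, LinearMap.comp_apply]; exact hFLwN
    rw [hbot] at hmem
    exact hwbarne ((Submodule.mem_bot F).mp hmem)
  · have hvML : Fprod σ L (j v) ∈ N := by
      have hmem : v ∈ Submodule.comap ((Fprod σ L) ∘ₗ j) N := htop ▸ Submodule.mem_top
      rwa [Submodule.mem_comap, LinearMap.comp_apply] at hmem
    have hEN : ∀ (s : List (Q m n)), ∀ z ∈ N, ((s.map (eop σ)).prod) z ∈ N := by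
      intro s
      induction s with
      | nil => intro z hz; rw [List.map_nil, List.prod_nil, Module.End.one_apply]; exact hz
      | cons a u ih =>
        intro z hz
        rw [List.map_cons, List.prod_cons, Module.End.mul_apply]
        exact hNinv _ _ (ih z hz)
    have hf1N : f1 • j v ∈ N := by rw [← hf1']; exact hEN L _ hvML
    have hjvN : j v ∈ N := by
      have := N.smul_mem f1⁻¹ hf1N
      rwa [smul_smul, inv_mul_cancel₀ hf1ne, one_smul] at this
    have hCNinv : ∀ X ∈ glGr F m n 0, ∀ w ∈ N.comap j, ρ X w ∈ N.comap j := by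
      intro X hX w hw
      rw [Submodule.mem_comap] at hw ⊢
      rw [hjequiv X hX]
      exact hNinv X _ hw
    rcases hMsimple _ hCNinv with hbot | htop2
    · exfalso
      have hmem : v ∈ N.comap j := by rw [Submodule.mem_comap]; exact hjvN
      rw [hbot] at hmem
      exact hvne ((Submodule.mem_bot F).mp hmem)
    · have hjN : ∀ w : M, j w ∈ N := by
        intro w
        have hmem : w ∈ N.comap j := htop2 ▸ Submodule.mem_top
        rwa [Submodule.mem_comap] at hmem
      have hgenN : gen ⊆ (N : Set Z) := by
        rintro g ⟨s, w, rfl⟩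
        induction s with
        | nil => rw [Fprod_nil, Module.End.one_apply]; exact hjN w
        | cons a u ih =>
          rw [Fprod_cons, Module.End.mul_apply]
          exact hNinv _ _ ih
      rw [eq_top_iff, ← hN'top, hN']
      exact Submodule.span_le.mpr hgenN
end
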